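/- arXiv:1212.0308 — 7 statements merged into one kernel-verified Lean document; each statement's English description precedes it below -/
import Mathlib

section
/- Let $q \geq 2$ and $d \geq 1$. Define $E(q,d) = \sum_{v=1}^{\infty} [1 - (1-q^{-v})^d]$. Then $|E(q,d) - \log_q d| \leq \frac{1}{\log 2}$, i.e., the distance between $E(q,d)$ and $\log d / \log q$ is bounded by $1/\log 2$. -/
open Finset

lemma auxE_hasDeriv (c : ℝ) (hc : c ≠ 0) (d : ℕ) (x : ℝ) :
    HasDerivAt (fun y => c⁻¹ * ∑ j ∈ Finset.range d, (1 - Real.exp (-c * y)) ^ (j + 1) / ((j : ℝ) + 1))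
      (1 - (1 - Real.exp (-c * x)) ^ d) x := by
  have h1 : HasDerivAt (fun y : ℝ => -c * y) (-c) x := by
    simpa only [id_eq, mul_one] using (hasDerivAt_id x).const_mul (-c)
  have hu : HasDerivAt (fun y => Real.exp (-c * y)) (Real.exp (-c * x) * -c) x := h1.exp
  have hterm : ∀ j ∈ Finset.range d,
      HasDerivAt (fun y => (1 - Real.exp (-c * y)) ^ (j + 1) / ((j : ℝ) + 1))
        ((↑(j + 1) * (1 - Real.exp (-c * x)) ^ (j + 1 - 1) * -(Real.exp (-c * x) * -c)) / ((j : ℝ) + 1)) x := by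
    intro j _
    exact ((hu.const_sub 1).pow (j + 1)).div_const _
  have hsum := (HasDerivAt.sum hterm).const_mul c⁻¹
  simp only [Finset.sum_apply] at hsum
  refine hsum.congr_deriv ?_
  have htermeq : ∀ j ∈ Finset.range d,
      (↑(j + 1) * (1 - Real.exp (-c * x)) ^ (j + 1 - 1) * -(Real.exp (-c * x) * -c)) / ((j : ℝ) + 1)
        = (c * Real.exp (-c * x)) * (1 - Real.exp (-c * x)) ^ j := by
    intro j _
    have hj : ((j : ℝ) + 1) ≠ 0 := by positivity
    push_cast
    field_simp
  have hS : Real.exp (-c * x) * (∑ j ∈ Finset.range d, (1 - Real.exp (-c * x)) ^ j)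
      = 1 - (1 - Real.exp (-c * x)) ^ d := by
    linear_combination -geom_sum_mul (1 - Real.exp (-c * x)) d
  rw [Finset.sum_congr rfl htermeq, ← Finset.mul_sum, mul_assoc, hS, inv_mul_cancel_left₀ hc]

lemma auxE_integral (c : ℝ) (hc : c ≠ 0) (d : ℕ) (hd : 1 ≤ d) (N : ℝ) :
    ∫ x in (0:ℝ)..N, (1 - (1 - Real.exp (-c * x)) ^ d)
      = c⁻¹ * ∑ j ∈ Finset.range d, (1 - Real.exp (-c * N)) ^ (j + 1) / ((j : ℝ) + 1) := by
  have h := intervalIntegral.integral_eq_sub_of_hasDerivAt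
    (f := fun y => c⁻¹ * ∑ j ∈ Finset.range d, (1 - Real.exp (-c * y)) ^ (j + 1) / ((j : ℝ) + 1))
    (fun x _ => auxE_hasDeriv c hc d x)
    (Continuous.intervalIntegrable (by fun_prop) 0 N)
  rw [h]
  simp

/-- `|E(q,d) - log_q d| ≤ 1/log 2`. -/
theorem stmt2 (q : ℕ) (hq : 2 ≤ q) (d : ℕ) (hd : 1 ≤ d) :
    |(∑' v : ℕ, (1 - (1 - (q : ℝ)⁻¹ ^ (v + 1)) ^ d)) - Real.log d / Real.log q|
      ≤ 1 / Real.log 2 := by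
  have hq1 : (1:ℝ) < q := by exact_mod_cast Nat.lt_of_lt_of_le one_lt_two hq
  have hq0 : (0:ℝ) < q := by linarith
  set c := Real.log q with hcdef
  have hc : 0 < c := Real.log_pos hq1
  have hlog2 : 0 < Real.log 2 := Real.log_pos one_lt_two
  have hc2 : Real.log 2 ≤ c := Real.log_le_log (by norm_num) (by exact_mod_cast hq)
  set g : ℝ → ℝ := fun x => 1 - (1 - Real.exp (-c * x)) ^ d with hgdef
  set s : ℕ → ℝ := fun v => 1 - (1 - (q : ℝ)⁻¹ ^ (v + 1)) ^ d with hsdef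
  set harm : ℝ := ∑ j ∈ Finset.range d, (1 : ℝ) / ((j : ℝ) + 1) with hharmdef
  have hexp : ∀ n : ℕ, Real.exp (-c * (n : ℝ)) = (q : ℝ)⁻¹ ^ n := by
    intro n
    rw [neg_mul, Real.exp_neg, mul_comm, Real.exp_nat_mul, Real.exp_log hq0, inv_pow]
  have hinvle : (q : ℝ)⁻¹ ≤ 1 := by
    rw [inv_le_one_iff₀]; right; linarith
  have hinvnn : (0:ℝ) ≤ (q : ℝ)⁻¹ := by positivity
  have hs_g : ∀ v : ℕ, s v = g ((v : ℝ) + 1) := by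
    intro v
    have := hexp (v + 1)
    push_cast at this
    simp only [hsdef, hgdef, ← this]
  have hnn : ∀ v, 0 ≤ s v := by
    intro v
    have h1 : (q : ℝ)⁻¹ ^ (v + 1) ≤ 1 := pow_le_one₀ hinvnn hinvle
    have h2 : (0:ℝ) ≤ (q : ℝ)⁻¹ ^ (v + 1) := by positivity
    have h3 : (1 - (q : ℝ)⁻¹ ^ (v + 1)) ^ d ≤ 1 := pow_le_one₀ (by linarith) (by linarith)
    simp only [hsdef]
    linarith
  -- antitone
  have hu_le : ∀ x : ℝ, 0 ≤ x → Real.exp (-c * x) ≤ 1 := by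
    intro x hx
    rw [Real.exp_le_one_iff]
    nlinarith
  have hanti : ∀ N : ℕ, AntitoneOn g (Set.Icc (0:ℝ) (0 + N)) := by
    intro N x hx y hy hxy
    have h1 : Real.exp (-c * y) ≤ Real.exp (-c * x) := by
      rw [Real.exp_le_exp]
      nlinarith [hx.1]
    have h2 : Real.exp (-c * x) ≤ 1 := hu_le x hx.1
    have h3 : (0:ℝ) ≤ 1 - Real.exp (-c * x) := by linarith
    have h4 := pow_le_pow_left₀ h3 (by linarith : 1 - Real.exp (-c * x) ≤ 1 - Real.exp (-c * y)) d
    simp only [hgdef]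
    linarith
  -- upper bound on H N
  have hHle : ∀ N : ℕ, c⁻¹ * ∑ j ∈ Finset.range d, (1 - Real.exp (-c * (N:ℝ))) ^ (j + 1) / ((j : ℝ) + 1)
      ≤ c⁻¹ * harm := by
    intro N
    apply mul_le_mul_of_nonneg_left _ (by positivity)
    apply Finset.sum_le_sum
    intro j _
    have h0 : (0:ℝ) ≤ 1 - Real.exp (-c * (N:ℝ)) := by
      have := hu_le (N:ℝ) (by positivity); linarith
    have h1 : (1:ℝ) - Real.exp (-c * (N:ℝ)) ≤ 1 := by
      have := Real.exp_pos (-c * (N:ℝ)); linarith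
    exact (div_le_div_iff_of_pos_right (by positivity)).mpr (pow_le_one₀ h0 h1)
  -- lower bound on H N
  have hHge : ∀ N : ℕ, c⁻¹ * (harm - d * (q:ℝ)⁻¹ ^ N)
      ≤ c⁻¹ * ∑ j ∈ Finset.range d, (1 - Real.exp (-c * (N:ℝ))) ^ (j + 1) / ((j : ℝ) + 1) := by
    intro N
    apply mul_le_mul_of_nonneg_left _ (by positivity)
    have hule : (q:ℝ)⁻¹ ^ N ≤ 1 := pow_le_one₀ hinvnn hinvle
    have hunn : (0:ℝ) ≤ (q:ℝ)⁻¹ ^ N := by positivity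
    have hstep : ∀ j ∈ Finset.range d,
        (1:ℝ)/((j:ℝ)+1) - (q:ℝ)⁻¹ ^ N ≤ (1 - Real.exp (-c * (N:ℝ))) ^ (j + 1) / ((j : ℝ) + 1) := by
      intro j _
      rw [hexp N]
      have h2 : (-2:ℝ) ≤ -((q:ℝ)⁻¹ ^ N) := by linarith
      have h3 := one_add_mul_le_pow h2 (j + 1)
      push_cast at h3
      have hj : (0:ℝ) < (j:ℝ)+1 := by positivity
      have h3' : 1 - ((j:ℝ)+1) * (q:ℝ)⁻¹ ^ N ≤ (1 - (q:ℝ)⁻¹ ^ N) ^ (j + 1) := by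
        rw [show (1:ℝ) - (q:ℝ)⁻¹ ^ N = 1 + -((q:ℝ)⁻¹ ^ N) from by ring]
        linarith [h3]
      calc (1:ℝ)/((j:ℝ)+1) - (q:ℝ)⁻¹ ^ N
          = (1 - ((j:ℝ)+1) * (q:ℝ)⁻¹ ^ N)/((j:ℝ)+1) := by
            rw [sub_div, mul_div_cancel_left₀ _ (ne_of_gt hj)]
        _ ≤ (1 - (q:ℝ)⁻¹ ^ N) ^ (j + 1) / ((j : ℝ) + 1) :=
            (div_le_div_iff_of_pos_right hj).mpr h3'
    calc harm - (d:ℝ) * (q:ℝ)⁻¹ ^ N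
        = ∑ j ∈ Finset.range d, ((1:ℝ)/((j:ℝ)+1) - (q:ℝ)⁻¹ ^ N) := by
          rw [Finset.sum_sub_distrib, Finset.sum_const, Finset.card_range, hharmdef]
          push_cast; ring
      _ ≤ _ := Finset.sum_le_sum hstep
  -- partial sums vs integral
  have hupper : ∀ N : ℕ, ∑ i ∈ Finset.range N, s i ≤ c⁻¹ * harm := by
    intro N
    have h1 := (hanti N).sum_le_integral
    rw [zero_add, auxE_integral c hc.ne' d hd (N:ℝ)] at h1
    refine le_trans (le_of_eq ?_) (h1.trans (hHle N))
    apply Finset.sum_congr rfl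
    intro i _
    rw [hs_g i]
    congr 1
    push_cast
    ring
  have hsum : Summable s := summable_of_sum_range_le hnn hupper
  have hE_le : (∑' v, s v) ≤ c⁻¹ * harm := Real.tsum_le_of_sum_range_le hnn hupper
  have hlow : ∀ M : ℕ, c⁻¹ * (harm - d * (q:ℝ)⁻¹ ^ (M+1)) ≤ 1 + ∑' v, s v := by
    intro M
    have h1 := (hanti (M+1)).integral_le_sum
    rw [zero_add, auxE_integral c hc.ne' d hd ((M+1:ℕ):ℝ)] at h1
    have h2 := (hHge (M+1)).trans h1
    have h3 : ∑ i ∈ Finset.range (M+1), g (0 + (i:ℝ)) = (∑ i ∈ Finset.range M, s i) + 1 := by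
      rw [Finset.sum_range_succ']
      congr 1
      · apply Finset.sum_congr rfl
        intro i _
        rw [hs_g i]
        congr 1
        push_cast
        ring
      · simp [hgdef, zero_pow (by omega : d ≠ 0)]
    rw [h3] at h2
    have h4 : ∑ i ∈ Finset.range M, s i ≤ ∑' v, s v := Summable.sum_le_tsum _ (fun i _ => hnn i) hsum
    linarith
  have hgeo : Filter.Tendsto (fun M : ℕ => (q:ℝ)⁻¹ ^ (M+1)) Filter.atTop (nhds 0) := by
    have h0 : Filter.Tendsto (fun M : ℕ => (q:ℝ)⁻¹ ^ M) Filter.atTop (nhds 0) :=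
      tendsto_pow_atTop_nhds_zero_of_lt_one hinvnn (by
        rw [inv_lt_one_iff₀]; right; exact hq1)
    simpa [pow_succ] using h0.mul_const (q:ℝ)⁻¹
  have hE_ge : c⁻¹ * harm ≤ 1 + ∑' v, s v := by
    have ht : Filter.Tendsto (fun M : ℕ => c⁻¹ * (harm - d * (q:ℝ)⁻¹ ^ (M+1))) Filter.atTop
        (nhds (c⁻¹ * (harm - d * 0))) :=
      (((hgeo.const_mul (d:ℝ)).const_sub harm).const_mul c⁻¹)
    have := le_of_tendsto ht (Filter.Eventually.of_forall hlow)
    simpa using this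
  -- harmonic bounds
  have hharmR : harm = ((harmonic d : ℚ) : ℝ) := by
    rw [hharmdef, harmonic]
    push_cast
    simp [one_div]
  have hlow2 : Real.log d ≤ harm := by
    rw [hharmR]
    refine le_trans ?_ (log_add_one_le_harmonic d)
    apply Real.log_le_log (by exact_mod_cast Nat.pos_of_ne_zero (by omega))
    push_cast
    linarith
  have hup2 : harm ≤ 1 + Real.log d := by rw [hharmR]; exact harmonic_le_one_add_log d
  rw [abs_le]
  have h6 : c⁻¹ * Real.log d ≤ c⁻¹ * harm := mul_le_mul_of_nonneg_left hlow2 (by positivity)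
  have h7 : Real.log d / c = c⁻¹ * Real.log d := by rw [div_eq_mul_inv]; ring
  constructor
  · have h8 : Real.log 2 ≤ 1 := by
      nlinarith [Real.log_le_sub_one_of_pos (show (0:ℝ) < 2 by norm_num)]
    have h9 : (1:ℝ) ≤ 1 / Real.log 2 := by rw [le_div_iff₀ hlog2]; linarith
    linarith [hE_ge]
  · have h10 : c⁻¹ * harm ≤ c⁻¹ * (1 + Real.log d) := mul_le_mul_of_nonneg_left hup2 (by positivity)
    have h11 : c⁻¹ * (1 + Real.log d) = 1/c + Real.log d / c := by
      rw [one_div, div_eq_mul_inv]; ring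
    have h12 : 1/c ≤ 1/Real.log 2 := one_div_le_one_div_of_le hlog2 hc2
    linarith [hE_le]
end

section
/- Let $q \geq 2$ and $d \geq 1$ and set $E(q,d) = \sum_{v=1}^\infty [1-(1-q^{-v})^d]$. Then $\big|E(q,d) - \lfloor \log_q d \rfloor\big| < \frac{q}{q-1} \cdot q^{-\mathrm{dist}(\log_q d,\, \mathbb{N})}$, where $\lfloor \log_q d \rfloor$ is the integer part of $\log_q d$ and $\mathrm{dist}(\log_q d, \mathbb{N})$ is the distance from $\log_q d$ to the set of natural numbers. -/
set_option maxHeartbeats 1000000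

open Real Finset

private lemma bern_le {t : ℝ} (h0 : 0 ≤ t) (h1 : t ≤ 1) (d : ℕ) :
    1 - (1 - t) ^ d ≤ d * t := by
  induction d with
  | zero => simp
  | succ n ih =>
    have hs : 0 ≤ 1 - t := by linarith
    have hp : (1 - t) ^ n ≤ 1 := pow_le_one₀ hs (by linarith)
    have hpn : 0 ≤ (1 - t) ^ n := pow_nonneg hs n
    have hpow : (1 - t) ^ (n + 1) = (1 - t) ^ n * (1 - t) := pow_succ _ _
    push_cast
    nlinarith

private lemma bern_lt {t : ℝ} (h0 : 0 < t) (h1 : t ≤ 1) {d : ℕ} (hd : 2 ≤ d) :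
    1 - (1 - t) ^ d < d * t := by
  obtain ⟨n, rfl⟩ := Nat.exists_eq_add_of_le hd
  have hs : 0 ≤ 1 - t := by linarith
  have ih := bern_le h0.le h1 (n + 1)
  have hq1 : (1 - t) ^ (n + 1) ≤ 1 - t := pow_le_of_le_one hs (by linarith) (Nat.succ_ne_zero n)
  have hpow : (1 - t) ^ (2 + n) = (1 - t) ^ (n + 1) * (1 - t) := by
    rw [← pow_succ]; ring_nf
  push_cast at ih ⊢
  nlinarith [mul_le_mul_of_nonneg_left hq1 h0.le, sq_nonneg t, mul_pos h0 h0]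

/-- `|E(q,d) - ⌊log_q d⌋| < q/(q-1) · q^{-dist(log_q d, ℕ)}`. -/
theorem stmt4 (q : ℕ) (hq : 2 ≤ q) (d : ℕ) (hd : 1 ≤ d) :
    |(∑' v : ℕ, (1 - (1 - (q : ℝ)⁻¹ ^ (v + 1)) ^ d)) - (⌊Real.logb q d⌋ : ℝ)| <
      (q : ℝ) / ((q : ℝ) - 1) *
        (q : ℝ) ^ (-(Metric.infDist (Real.logb q d) (Set.range (Nat.cast : ℕ → ℝ)))) := by
  have hq1 : (1:ℝ) < (q:ℝ) := by exact_mod_cast lt_of_lt_of_le one_lt_two hq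
  have hq0 : (0:ℝ) < (q:ℝ) := by linarith
  have hqne1 : (q:ℝ) ≠ 1 := ne_of_gt hq1
  have hinv1 : (q:ℝ)⁻¹ < 1 := inv_lt_one_of_one_lt₀ hq1
  have hinv0 : (0:ℝ) < (q:ℝ)⁻¹ := inv_pos.mpr hq0
  set x := Real.logb q d with hxdef
  have hd0 : (0:ℝ) < (d:ℝ) := by exact_mod_cast hd
  have hx0 : 0 ≤ x := Real.logb_nonneg hq1 (by exact_mod_cast hd)
  have hqd : ((q:ℝ)) ^ x = (d:ℝ) := Real.rpow_logb hq0 hqne1 hd0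
  set D := Metric.infDist x (Set.range (Nat.cast : ℕ → ℝ)) with hDdef
  set m : ℕ := ⌊x⌋₊ with hmdef
  have hfl : ((⌊x⌋ : ℤ) : ℝ) = (m : ℝ) := (natCast_floor_eq_intCast_floor hx0).symm
  set θ := x - (m : ℝ) with hθdef
  have hθ0 : 0 ≤ θ := by
    have := Nat.floor_le hx0
    simp only [hθdef]; linarith
  have hθ1 : θ < 1 := by
    have := Nat.lt_floor_add_one x
    simp only [hθdef]; linarith
  have hD0 : 0 ≤ D := Metric.infDist_nonneg
  have hDθ : D ≤ θ := by
    have h := Metric.infDist_le_dist_of_mem (x := x) (y := ((m:ℕ):ℝ)) (Set.mem_range_self m)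
    rw [Real.dist_eq, abs_of_nonneg (by linarith)] at h
    linarith
  have hD1θ : D ≤ 1 - θ := by
    have h := Metric.infDist_le_dist_of_mem (x := x) (y := (((m+1):ℕ):ℝ)) (Set.mem_range_self (m+1))
    rw [Real.dist_eq] at h
    push_cast at h
    rw [abs_of_nonpos (by linarith)] at h
    linarith
  have hfrac : (0:ℝ) < (q:ℝ) / ((q:ℝ) - 1) := by
    apply div_pos hq0; linarith
  -- basic term facts
  have ht0 : ∀ v : ℕ, (0:ℝ) < (q:ℝ)⁻¹ ^ (v+1) := fun v => pow_pos hinv0 _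
  have ht1 : ∀ v : ℕ, (q:ℝ)⁻¹ ^ (v+1) ≤ 1 := fun v => pow_le_one₀ hinv0.le hinv1.le
  have hg0 : ∀ v : ℕ, (0:ℝ) ≤ 1 - (1 - (q:ℝ)⁻¹ ^ (v+1)) ^ d := by
    intro v
    have : (1 - (q:ℝ)⁻¹ ^ (v+1)) ^ d ≤ 1 :=
      pow_le_one₀ (by linarith [ht1 v]) (by linarith [ht0 v])
    linarith
  have hgle : ∀ v : ℕ, 1 - (1 - (q:ℝ)⁻¹ ^ (v+1)) ^ d ≤ (d:ℝ) * (q:ℝ)⁻¹ ^ (v+1) :=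
    fun v => bern_le (ht0 v).le (ht1 v) d
  -- rpow facts
  have hpw : ∀ k : ℕ, (q:ℝ)⁻¹ ^ (k+1) = (q:ℝ) ^ (-((k:ℝ)+1)) := by
    intro k
    rw [inv_pow, ← Real.rpow_natCast (q:ℝ) (k+1), ← Real.rpow_neg hq0.le]
    push_cast; ring_nf
  have hdt : ∀ k : ℕ, (d:ℝ) * (q:ℝ)⁻¹ ^ (k+1) = (q:ℝ) ^ (x - ((k:ℝ)+1)) := by
    intro k
    rw [hpw k, ← hqd, ← Real.rpow_add hq0]
    ring_nf
  -- summability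
  have hGsum : Summable (fun v : ℕ => (d:ℝ) * (q:ℝ)⁻¹ ^ (v+1)) := by
    have h := (summable_geometric_of_lt_one hinv0.le hinv1).mul_left ((d:ℝ) * (q:ℝ)⁻¹)
    refine h.congr fun v => ?_
    rw [pow_succ]; ring
  have hgsum : Summable (fun v : ℕ => 1 - (1 - (q:ℝ)⁻¹ ^ (v+1)) ^ d) :=
    Summable.of_nonneg_of_le hg0 hgle hGsum
  -- split the sum at m
  have hsplit := Summable.sum_add_tsum_nat_add (f := fun v : ℕ => 1 - (1 - (q:ℝ)⁻¹ ^ (v+1)) ^ d) m hgsum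
  set A := ∑' v : ℕ, (1 - (1 - (q:ℝ)⁻¹ ^ (v+m+1)) ^ d) with hAdef
  set B := ∑ v ∈ range m, (1 - (q:ℝ)⁻¹ ^ (v+1)) ^ d with hBdef
  have hEsplit : (∑' v : ℕ, (1 - (1 - (q:ℝ)⁻¹ ^ (v+1)) ^ d)) = ((m:ℝ) - B) + A := by
    rw [← hsplit]
    congr 1
    rw [Finset.sum_sub_distrib, Finset.sum_const, Finset.card_range]
    simp [hBdef]
  have hA0 : 0 ≤ A := tsum_nonneg fun v => hg0 (v+m)
  have hB0 : 0 ≤ B := Finset.sum_nonneg fun v _ => pow_nonneg (by linarith [ht1 v]) d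
  -- summability of shifted dominating series and its value
  have hGsum' : Summable (fun v : ℕ => (d:ℝ) * (q:ℝ)⁻¹ ^ (v+m+1)) := by
    have h := (summable_geometric_of_lt_one hinv0.le hinv1).mul_left
      ((d:ℝ) * (q:ℝ)⁻¹ ^ (m+1))
    refine h.congr fun v => ?_
    rw [show v + m + 1 = (m+1) + v by ring, pow_add]; ring
  have htsumG : (∑' v : ℕ, (d:ℝ) * (q:ℝ)⁻¹ ^ (v+m+1)) =
      (q:ℝ) / ((q:ℝ) - 1) * (q:ℝ) ^ (-(1 - θ)) := by
    have h1 : (fun v : ℕ => (d:ℝ) * (q:ℝ)⁻¹ ^ (v+m+1)) =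
        (fun v : ℕ => ((d:ℝ) * (q:ℝ)⁻¹ ^ (m+1)) * (q:ℝ)⁻¹ ^ v) := by
      funext v; rw [show v + m + 1 = (m+1) + v by ring, pow_add]; ring
    rw [h1, tsum_mul_left, tsum_geometric_of_lt_one hinv0.le hinv1]
    have h2 : (d:ℝ) * (q:ℝ)⁻¹ ^ (m+1) = (q:ℝ) ^ (θ - 1) := by
      rw [hdt m]; congr 1; rw [hθdef]; ring
    have hne : (q:ℝ) - 1 ≠ 0 := by intro h; apply hqne1; linarith
    have h3 : (1 - (q:ℝ)⁻¹)⁻¹ = (q:ℝ) / ((q:ℝ) - 1) := by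
      field_simp
    rw [h2, h3, show -(1 - θ) = θ - 1 by ring]
    ring
  -- bound A (non-strict always; strict if 2 ≤ d)
  have hAle : A ≤ (q:ℝ) / ((q:ℝ) - 1) * (q:ℝ) ^ (-(1 - θ)) := by
    rw [← htsumG]
    exact Summable.tsum_le_tsum (fun v => hgle (v+m)) ((summable_nat_add_iff m).mpr hgsum) hGsum'
  have hAlt : 2 ≤ d → A < (q:ℝ) / ((q:ℝ) - 1) * (q:ℝ) ^ (-(1 - θ)) := by
    intro hd2
    rw [← htsumG]
    exact Summable.tsum_lt_tsum_of_nonneg (fun v => hg0 (v+m)) (fun v => hgle (v+m))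
      (bern_lt (ht0 (0+m)) (ht1 (0+m)) hd2) hGsum'
  -- bound B (strict)
  have hBlt : B < (q:ℝ) / ((q:ℝ) - 1) * (q:ℝ) ^ (-θ) := by
    have hTθ : (0:ℝ) < (q:ℝ) / ((q:ℝ) - 1) * (q:ℝ) ^ (-θ) :=
      mul_pos hfrac (Real.rpow_pos_of_pos hq0 _)
    rcases Nat.eq_zero_or_pos m with hm0 | hmpos
    · rw [hBdef, hm0]; simpa using hTθ
    have hterm : ∀ v ∈ range m, (1 - (q:ℝ)⁻¹ ^ (v+1)) ^ d < (q:ℝ) ^ (((v:ℝ)+1) - x) := by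
      intro v hv
      set t := (q:ℝ)⁻¹ ^ (v+1) with htdef
      have h1 : (1 - t) ≤ Real.exp (-t) := by
        have := Real.add_one_le_exp (-t); linarith
      have h2 : (1 - t) ^ d ≤ Real.exp (-t) ^ d :=
        pow_le_pow_left₀ (by linarith [ht1 v]) h1 d
      have h3 : Real.exp (-t) ^ d = Real.exp (-((d:ℝ) * t)) := by
        rw [← Real.exp_nat_mul]; ring_nf
      have hu0 : 0 < (d:ℝ) * t := mul_pos hd0 (ht0 v)
      have h4 : Real.exp (-((d:ℝ) * t)) < ((d:ℝ) * t)⁻¹ := by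
        rw [Real.exp_neg]
        apply inv_strictAnti₀ hu0
        have := Real.add_one_le_exp ((d:ℝ) * t)
        linarith
      have h5 : ((d:ℝ) * t)⁻¹ = (q:ℝ) ^ (((v:ℝ)+1) - x) := by
        rw [htdef, hdt v, ← Real.rpow_neg hq0.le]
        congr 1; ring
      calc (1 - t) ^ d ≤ Real.exp (-t) ^ d := h2
        _ = Real.exp (-((d:ℝ) * t)) := h3
        _ < ((d:ℝ) * t)⁻¹ := h4
        _ = (q:ℝ) ^ (((v:ℝ)+1) - x) := h5
    have hsumlt : B < ∑ v ∈ range m, (q:ℝ) ^ (((v:ℝ)+1) - x) :=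
      Finset.sum_lt_sum_of_nonempty (Finset.nonempty_range_iff.mpr (by omega)) hterm
    have hsumle : (∑ v ∈ range m, (q:ℝ) ^ (((v:ℝ)+1) - x)) ≤
        (q:ℝ) / ((q:ℝ) - 1) * (q:ℝ) ^ (-θ) := by
      have h1 : ∀ v ∈ range m, (q:ℝ) ^ (((v:ℝ)+1) - x) = (q:ℝ) ^ ((1:ℝ) - x) * (q:ℝ) ^ v := by
        intro v _
        rw [← Real.rpow_natCast (q:ℝ) v, ← Real.rpow_add hq0]
        congr 1; ring
      rw [Finset.sum_congr rfl h1, ← Finset.mul_sum, geom_sum_eq hqne1]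
      have e1 : (q:ℝ) * (q:ℝ) ^ (-θ) = (q:ℝ) ^ ((1:ℝ)-x) * (q:ℝ) ^ (m:ℕ) := by
        rw [← Real.rpow_natCast (q:ℝ) m, ← Real.rpow_add hq0]
        have h : (q:ℝ) * (q:ℝ) ^ (-θ) = (q:ℝ) ^ (1:ℝ) * (q:ℝ) ^ (-θ) := by
          rw [Real.rpow_one]
        rw [h, ← Real.rpow_add hq0]
        congr 1; rw [hθdef]; ring
      have hrpos : (0:ℝ) < (q:ℝ) ^ ((1:ℝ) - x) := Real.rpow_pos_of_pos hq0 _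
      have hsub : ((q:ℝ) ^ m - 1) / ((q:ℝ) - 1) ≤ (q:ℝ) ^ m / ((q:ℝ) - 1) := by
        gcongr
        · linarith
      calc (q:ℝ) ^ ((1:ℝ)-x) * (((q:ℝ) ^ m - 1) / ((q:ℝ) - 1))
          ≤ (q:ℝ) ^ ((1:ℝ)-x) * ((q:ℝ) ^ m / ((q:ℝ) - 1)) := by
            exact mul_le_mul_of_nonneg_left hsub hrpos.le
        _ = ((q:ℝ) * (q:ℝ) ^ (-θ)) / ((q:ℝ) - 1) := by rw [e1]; ring
        _ = (q:ℝ) / ((q:ℝ) - 1) * (q:ℝ) ^ (-θ) := by ring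
    linarith
  -- combine
  have hAT : A < (q:ℝ) / ((q:ℝ) - 1) * (q:ℝ) ^ (-D) := by
    rcases Nat.lt_or_ge d 2 with hd2 | hd2
    · -- d = 1
      have hd1 : d = 1 := le_antisymm (by omega) hd
      have hx : x = 0 := by simp [hxdef, hd1]
      have hθz : θ = 0 := by
        simp [hθdef, hmdef, hx]
      have hDz : D ≤ 0 := by
        have h := Metric.infDist_le_dist_of_mem (x := x) (y := ((0:ℕ):ℝ)) (Set.mem_range_self 0)
        have hdist : dist x ((0:ℕ):ℝ) = 0 := by rw [Real.dist_eq, hx]; simp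
        rw [hdist] at h
        linarith [h]
      calc A ≤ (q:ℝ) / ((q:ℝ) - 1) * (q:ℝ) ^ (-(1 - θ)) := hAle
        _ < (q:ℝ) / ((q:ℝ) - 1) * (q:ℝ) ^ (-D) := by
          apply mul_lt_mul_of_pos_left _ hfrac
          apply Real.rpow_lt_rpow_of_exponent_lt hq1
          rw [hθz]; linarith
    · calc A < (q:ℝ) / ((q:ℝ) - 1) * (q:ℝ) ^ (-(1 - θ)) := hAlt hd2
        _ ≤ (q:ℝ) / ((q:ℝ) - 1) * (q:ℝ) ^ (-D) := by
          apply mul_le_mul_of_nonneg_left _ hfrac.le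
          exact Real.rpow_le_rpow_of_exponent_le hq1.le (by linarith)
  have hBT : B < (q:ℝ) / ((q:ℝ) - 1) * (q:ℝ) ^ (-D) :=
    lt_of_lt_of_le hBlt (mul_le_mul_of_nonneg_left
      (Real.rpow_le_rpow_of_exponent_le hq1.le (by linarith)) hfrac.le)
  rw [hEsplit, hfl, show ((m:ℝ) - B + A) - (m:ℝ) = A - B from by ring, abs_sub_lt_iff]
  constructor <;> linarith
end

section
/- Let $W_1, \ldots, W_n$ be mutually independent random variables taking values in $\mathbb{N}$, where $W_i$ is geometric of parameter $1-q^{-i}$ (i.e., $\mathbb{P}[W_i = v] = (1-q^{-i}) q^{-iv}$ for all $v \in \mathbb{N}$). Then for every integer $v \geq 0$, $\mathbb{P}[W_1 + \cdots + W_n \leq v] = (1-q^{-v-1})(1-q^{-v-2}) \cdots (1-q^{-v-n})$. -/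
lemma geom_conv (c : ℝ) (k v : ℕ) :
    ∑ w ∈ Finset.range (v+1),
      ((1 - c^(k+1)) * (c^(k+1))^w * ∏ i ∈ Finset.range k, (1 - c^((v-w) + i + 1)))
    = ∏ i ∈ Finset.range (k+1), (1 - c^(v + i + 1)) := by
  induction v with
  | zero =>
      simp [Finset.prod_range_succ]
      ring
  | succ v ih =>
      rw [Finset.sum_range_succ']
      have h1 : ∀ w ∈ Finset.range (v+1),
          (1 - c^(k+1)) * (c^(k+1))^(w+1) * ∏ i ∈ Finset.range k, (1 - c^((v+1-(w+1)) + i + 1))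
          = c^(k+1) * ((1 - c^(k+1)) * (c^(k+1))^w * ∏ i ∈ Finset.range k, (1 - c^((v-w) + i + 1))) := by
        intro w _
        have : v + 1 - (w + 1) = v - w := by omega
        rw [this]; ring
      rw [Finset.sum_congr rfl h1, ← Finset.mul_sum, ih]
      have h2 : ∏ i ∈ Finset.range (k+1), (1 - c^(v + i + 1))
          = (∏ i ∈ Finset.range k, (1 - c^(v + 1 + i + 1))) * (1 - c^(v+1)) := by
        rw [Finset.prod_range_succ']
        congr 1
        apply Finset.prod_congr rfl
        intro i _
        congr 2
        omega
      have h3 : ∏ i ∈ Finset.range (k+1), (1 - c^(v + 1 + i + 1))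
          = (∏ i ∈ Finset.range k, (1 - c^(v + 1 + i + 1))) * (1 - c^(v + 1 + k + 1)) :=
        Finset.prod_range_succ _ _
      rw [h2, h3]
      have h4 : c^(v + 1 + k + 1) = c^(k+1) * c^(v+1) := by rw [← pow_add]; congr 1; omega
      rw [h4]
      simp only [Nat.sub_zero, pow_zero]
      ring

open MeasureTheory ProbabilityTheory

lemma key {Ω : Type*} [MeasurableSpace Ω] (μ : Measure Ω) [IsProbabilityMeasure μ]
    (q n : ℕ) (W : Fin n → Ω → ℕ) (hmeas : ∀ i, Measurable (W i))
    (hindep : iIndepFun W μ)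
    (hlaw : ∀ i : Fin n, ∀ v : ℕ,
      (μ {ω | W i ω = v}).toReal =
        (1 - (q : ℝ)⁻¹ ^ ((i : ℕ) + 1)) * ((q : ℝ)⁻¹ ^ ((i : ℕ) + 1)) ^ v) :
    ∀ k, k ≤ n → ∀ v : ℕ,
      (μ {ω | ∑ i ∈ Finset.univ.filter (fun i : Fin n => (i : ℕ) < k), W i ω ≤ v}).toReal
        = ∏ i ∈ Finset.range k, (1 - (q : ℝ)⁻¹ ^ (v + i + 1)) := by
  intro k
  induction k with
  | zero =>
      intro _ v
      have : Finset.univ.filter (fun i : Fin n => (i : ℕ) < 0) = ∅ := by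
        apply Finset.filter_false_of_mem; intro i _; omega
      simp [this]
  | succ k ih =>
      intro hk v
      have hk' : k < n := hk
      set j : Fin n := ⟨k, hk'⟩ with hj
      set s : Finset (Fin n) := Finset.univ.filter (fun i : Fin n => (i : ℕ) < k) with hs
      have hjs : j ∉ s := by simp [hs, hj]
      have hins : Finset.univ.filter (fun i : Fin n => (i : ℕ) < k + 1) = insert j s := by
        ext i
        simp only [Finset.mem_filter, Finset.mem_univ, true_and, Finset.mem_insert, hs, hj]
        constructor
        · intro h
          rcases Nat.lt_succ_iff_lt_or_eq.mp h with h | h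
          · exact Or.inr (by simp [h])
          · exact Or.inl (Fin.ext h)
        · rintro (rfl | h)
          · simp
          · omega
      set S : Ω → ℕ := fun ω => ∑ i ∈ s, W i ω with hS
      have hSmeas : Measurable S := Finset.measurable_sum s fun i _ => hmeas i
      have hsum : ∀ ω, ∑ i ∈ Finset.univ.filter (fun i : Fin n => (i : ℕ) < k + 1), W i ω
          = W j ω + S ω := by
        intro ω; rw [hins, Finset.sum_insert hjs]
      have hInd : IndepFun S (W j) μ := by
        have := hindep.indepFun_finsetSum_of_notMem hmeas hjs
        have he : (∑ i ∈ s, W i) = S := by ext ω; simp [hS, Finset.sum_apply]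
        rwa [he] at this
      -- decompose the event
      have hset : {ω | ∑ i ∈ Finset.univ.filter (fun i : Fin n => (i : ℕ) < k + 1), W i ω ≤ v}
          = ⋃ w ∈ Finset.range (v + 1), ({ω | W j ω = w} ∩ {ω | S ω ≤ v - w}) := by
        ext ω
        simp only [Set.mem_setOf_eq, hsum, Set.mem_iUnion, Finset.mem_range, Set.mem_inter_iff]
        constructor
        · intro h
          exact ⟨W j ω, by omega, rfl, by omega⟩
        · rintro ⟨w, hw, rfl, h2⟩
          omega
      have hmeasSet : ∀ w : ℕ, MeasurableSet ({ω | W j ω = w} ∩ {ω | S ω ≤ v - w}) := by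
        intro w
        exact ((hmeas j) (measurableSet_singleton w)).inter
          (hSmeas measurableSet_Iic)
      have hdisj : (↑(Finset.range (v + 1)) : Set ℕ).PairwiseDisjoint
          (fun w => ({ω | W j ω = w} ∩ {ω | S ω ≤ v - w})) := by
        intro a _ b _ hab
        apply Set.disjoint_left.mpr
        rintro ω ⟨h1, _⟩ ⟨h2, _⟩
        exact hab (h1.symm.trans h2)
      rw [hset, measure_biUnion_finset hdisj fun w _ => hmeasSet w,
        ENNReal.toReal_sum (fun w _ => (measure_ne_top μ _))]
      have hterm : ∀ w ∈ Finset.range (v + 1),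
          (μ ({ω | W j ω = w} ∩ {ω | S ω ≤ v - w})).toReal
          = ((1 - (q : ℝ)⁻¹ ^ (k + 1)) * ((q : ℝ)⁻¹ ^ (k + 1)) ^ w
              * ∏ i ∈ Finset.range k, (1 - (q : ℝ)⁻¹ ^ ((v - w) + i + 1))) := by
        intro w _
        have hmul : μ ({ω | W j ω = w} ∩ {ω | S ω ≤ v - w})
            = μ {ω | W j ω = w} * μ {ω | S ω ≤ v - w} := by
          have := hInd.measure_inter_preimage_eq_mul {x | x ≤ v - w} {w}
            measurableSet_Iic (measurableSet_singleton w)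
          have h1 : S ⁻¹' {x | x ≤ v - w} = {ω | S ω ≤ v - w} := rfl
          have h2 : W j ⁻¹' {w} = {ω | W j ω = w} := by ext ω; simp
          rw [h1, h2] at this
          rw [Set.inter_comm, this, mul_comm]
        rw [hmul, ENNReal.toReal_mul, hlaw j w, ih (le_of_lt hk) (v - w)]
      rw [Finset.sum_congr rfl hterm]
      exact geom_conv ((q : ℝ)⁻¹) k v

/-- Sum of independent geometric variables `W_i` of parameter `1-q^{-i}` (`i = 1,…,n`):
`ℙ[W_1+⋯+W_n ≤ v] = ∏_{i=1}^n (1-q^{-v-i})`. -/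
theorem stmt5 {Ω : Type*} [MeasurableSpace Ω] (μ : Measure Ω) [IsProbabilityMeasure μ]
    (q n : ℕ) (hq : 2 ≤ q) (hn : 1 ≤ n)
    (W : Fin n → Ω → ℕ) (hmeas : ∀ i, Measurable (W i))
    (hindep : iIndepFun W μ)
    (hlaw : ∀ i : Fin n, ∀ v : ℕ,
      (μ {ω | W i ω = v}).toReal =
        (1 - (q : ℝ)⁻¹ ^ ((i : ℕ) + 1)) * ((q : ℝ)⁻¹ ^ ((i : ℕ) + 1)) ^ v)
    (v : ℕ) :
    (μ {ω | ∑ i, W i ω ≤ v}).toReal =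
      ∏ i : Fin n, (1 - (q : ℝ)⁻¹ ^ (v + (i : ℕ) + 1)) := by
  have h := key μ q n W hmeas hindep hlaw n le_rfl v
  have hfil : Finset.univ.filter (fun i : Fin n => (i : ℕ) < n) = Finset.univ := by
    apply Finset.filter_true_of_mem; intro i _; exact i.is_lt
  rw [hfil] at h
  rw [h, Finset.prod_range fun i => (1 - (q : ℝ)⁻¹ ^ (v + i + 1))]
end

section
/- Define $\Pi(q) = q \cdot \prod_{i=1}^{\infty} (1-q^{-i})$ for an integer $q \geq 2$. Then $q - 1 - \frac{1}{q-1} < \Pi(q) < q-1$. -/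
open Finset Filter

/-- Weierstrass product inequality: `1 - ∑ aᵢ ≤ ∏ (1 - aᵢ)`. -/
lemma aux_weierstrass (a : ℕ → ℝ) (h0 : ∀ i, 0 ≤ a i) (h1 : ∀ i, a i ≤ 1) (n : ℕ) :
    1 - ∑ i ∈ Finset.range n, a i ≤ ∏ i ∈ Finset.range n, (1 - a i) := by
  induction n with
  | zero => simp
  | succ n ih =>
    rw [Finset.prod_range_succ, Finset.sum_range_succ]
    have hS : 0 ≤ ∑ i ∈ Finset.range n, a i :=
      Finset.sum_nonneg fun i _ => h0 i
    have han := h0 n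
    have han1 := h1 n
    nlinarith [mul_le_mul_of_nonneg_right ih (by linarith : (0:ℝ) ≤ 1 - a n)]

/-- `q-1-1/(q-1) < Π(q) = q·∏_{i≥1}(1-q^{-i}) < q-1`. -/
theorem stmt8 (q : ℕ) (hq : 2 ≤ q) :
    (q : ℝ) - 1 - 1 / ((q : ℝ) - 1) < (q : ℝ) * ∏' i : ℕ, (1 - (q : ℝ)⁻¹ ^ (i + 1)) ∧
      (q : ℝ) * ∏' i : ℕ, (1 - (q : ℝ)⁻¹ ^ (i + 1)) < (q : ℝ) - 1 := by
  have hq2 : (2:ℝ) ≤ (q:ℝ) := by exact_mod_cast hq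
  have hq1 : (1:ℝ) < (q:ℝ) := by linarith
  set x : ℝ := (q:ℝ)⁻¹ with hxdef
  have hx0 : 0 < x := inv_pos.2 (by linarith)
  have hxh : x ≤ 1/2 := by
    rw [hxdef]
    rw [inv_le_comm₀ (by linarith) (by norm_num)]
    norm_num; linarith
  have hx1 : x < 1 := by linarith
  -- bounds on the factors
  have hpowle : ∀ i : ℕ, x ^ (i+1) ≤ x := by
    intro i
    calc x ^ (i+1) ≤ x ^ 1 := pow_le_pow_of_le_one hx0.le hx1.le (by omega)
    _ = x := pow_one x
  have hpow0 : ∀ i : ℕ, 0 < x ^ (i+1) := fun i => pow_pos hx0 _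
  have hf0 : ∀ i : ℕ, 0 < 1 - x ^ (i+1) := fun i => by
    have := hpowle i; linarith
  have hf1 : ∀ i : ℕ, 1 - x ^ (i+1) ≤ 1 := fun i => by
    have := hpow0 i; linarith
  -- Multipliability
  have hsum : Summable fun n : ℕ => Real.log (1 - x ^ (n+1)) := by
    apply Summable.of_norm_bounded (g := fun n => 2 * x ^ (n+1))
    · exact (summable_geometric_of_lt_one hx0.le hx1).mul_left 2 |>.comp_injective
        (add_left_injective 1) |>.congr (by intro n; simp [pow_succ]) |>.congr (fun n => rfl)
    · intro n
      have h1 : 0 < 1 - x ^ (n+1) := hf0 n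
      have h2 : Real.log (1 - x ^ (n+1)) ≤ 0 :=
        Real.log_nonpos (by positivity) (by have := hpow0 n; linarith)
      rw [Real.norm_eq_abs, abs_of_nonpos h2]
      have h3 : -Real.log (1 - x ^ (n+1)) = Real.log (1 - x ^ (n+1))⁻¹ :=
        (Real.log_inv _).symm
      rw [h3]
      have h4 : Real.log (1 - x ^ (n+1))⁻¹ ≤ (1 - x ^ (n+1))⁻¹ - 1 :=
        Real.log_le_sub_one_of_pos (inv_pos.2 h1)
      have h5 : (1 - x ^ (n+1))⁻¹ - 1 = x ^ (n+1) / (1 - x ^ (n+1)) := by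
        field_simp
        ring
      have h6 : x ^ (n+1) ≤ 1/2 := le_trans (hpowle n) hxh
      have h7 : (1:ℝ)/2 ≤ 1 - x ^ (n+1) := by linarith
      have h8 : x ^ (n+1) / (1 - x ^ (n+1)) ≤ x ^ (n+1) / (1/2) :=
        div_le_div_of_nonneg_left (hpow0 n).le (by norm_num) h7
      have h9 : x ^ (n+1) / (1/2) = 2 * x ^ (n+1) := by ring
      linarith
  have hmult : Multipliable fun i : ℕ => 1 - x ^ (i+1) := by
    have := Real.multipliable_of_summable_log hf0 hsum
    exact this
  set P : ℝ := ∏' i : ℕ, (1 - x ^ (i+1)) with hPdef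
  have htend : Tendsto (fun n => ∏ i ∈ Finset.range n, (1 - x ^ (i+1))) atTop (nhds P) :=
    hmult.hasProd.tendsto_prod_nat
  -- Lower bound: P ≥ 1 - x - x²
  have hgeom : ∀ n : ℕ, ∑ i ∈ Finset.range n, x ^ (i+2) ≤ x^2 / (1-x) := by
    intro n
    have : ∑ i ∈ Finset.range n, x ^ (i+2) = x^2 * ∑ i ∈ Finset.range n, x ^ i := by
      rw [Finset.mul_sum]; congr 1; ext i; ring
    rw [this]
    have hg : ∑ i ∈ Finset.range n, x ^ i ≤ (1-x)⁻¹ := by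
      have h := Summable.sum_le_tsum (Finset.range n) (fun i _ => (pow_pos hx0 i).le)
        (summable_geometric_of_lt_one hx0.le hx1)
      rwa [tsum_geometric_of_lt_one hx0.le hx1] at h
    calc x^2 * ∑ i ∈ Finset.range n, x ^ i ≤ x^2 * (1-x)⁻¹ := by
          apply mul_le_mul_of_nonneg_left hg (by positivity)
      _ = x^2 / (1-x) := by rw [div_eq_mul_inv]
  have hlow : ∀ n : ℕ, 1 - x - x^2 ≤ ∏ i ∈ Finset.range n, (1 - x ^ (i+1)) := by
    intro n
    cases n with
    | zero => simp; nlinarith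
    | succ m =>
      have hsplit : ∏ i ∈ Finset.range (m+1), (1 - x ^ (i+1)) =
          (∏ i ∈ Finset.range m, (1 - x ^ (i+2))) * (1 - x ^ (0+1)) := by
        rw [← Finset.prod_range_succ' (fun i => 1 - x ^ (i+1)) m]
      rw [hsplit]
      have hw := aux_weierstrass (fun i => x ^ (i+2))
        (fun i => (pow_pos hx0 _).le)
        (fun i => by
          have : x ^ (i+2) ≤ x := by
            calc x ^ (i+2) ≤ x ^ 1 := pow_le_pow_of_le_one hx0.le hx1.le (by omega)
            _ = x := pow_one x
          linarith) m
      have hgm := hgeom m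
      have hq1' : (0:ℝ) < 1 - x := by linarith
      have hlow2 : 1 - x^2/(1-x) ≤ ∏ i ∈ Finset.range m, (1 - x ^ (i+2)) := by
        refine le_trans ?_ hw
        linarith
      have h01 : (0:ℝ) ≤ 1 - x ^ (0+1) := by simpa using (hf0 0).le
      calc 1 - x - x^2 = (1 - x^2/(1-x)) * (1 - x) := by field_simp
        _ ≤ (∏ i ∈ Finset.range m, (1 - x ^ (i+2))) * (1 - x) :=
            mul_le_mul_of_nonneg_right hlow2 hq1'.le
        _ = (∏ i ∈ Finset.range m, (1 - x ^ (i+2))) * (1 - x ^ (0+1)) := by norm_num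
  have hPlow : 1 - x - x^2 ≤ P := ge_of_tendsto' htend hlow
  -- Upper bound: P ≤ (1-x)(1-x²) (eventually the partial products are ≤ this)
  have p2 : ∏ i ∈ Finset.range 2, (1 - x ^ (i+1)) = (1 - x) * (1 - x^2) := by
    simp [Finset.prod_range_succ]
  have hanti : ∀ n, 2 ≤ n → ∏ i ∈ Finset.range n, (1 - x ^ (i+1)) ≤ (1-x)*(1-x^2) := by
    intro n hn
    rw [← p2]
    induction n with
    | zero => omega
    | succ m ih =>
      rcases Nat.lt_or_ge m 2 with hm | hm
      · interval_cases m
        · omega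
        · rw [Finset.prod_range_succ]
      · have := ih hm
        rw [Finset.prod_range_succ]
        calc (∏ i ∈ Finset.range m, (1 - x ^ (i+1))) * (1 - x ^ (m+1))
            ≤ (∏ i ∈ Finset.range m, (1 - x ^ (i+1))) * 1 := by
              apply mul_le_mul_of_nonneg_left (hf1 m)
              exact Finset.prod_nonneg fun i _ => (hf0 i).le
          _ = ∏ i ∈ Finset.range m, (1 - x ^ (i+1)) := mul_one _
          _ ≤ _ := this
  have hPhigh : P ≤ (1-x)*(1-x^2) :=
    le_of_tendsto htend (eventually_atTop.2 ⟨2, hanti⟩)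
  -- Final arithmetic
  have hxq : x * (q:ℝ) = 1 := inv_mul_cancel₀ (by linarith)
  constructor
  · have h1 : (q:ℝ) * (1 - x - x^2) ≤ (q:ℝ) * P :=
      mul_le_mul_of_nonneg_left hPlow (by linarith)
    refine lt_of_lt_of_le ?_ h1
    have hq0 : (0:ℝ) < (q:ℝ) - 1 := by linarith
    have hqne : (q:ℝ) ≠ 0 := by linarith
    have e1 : (q:ℝ) * (1 - x - x^2) = (q:ℝ) - 1 - x := by
      rw [hxdef]; field_simp
    rw [e1]
    have hxlt : x < 1/((q:ℝ)-1) := by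
      rw [hxdef, inv_eq_one_div]
      exact one_div_lt_one_div_of_lt hq0 (by linarith)
    linarith
  · have h1 : (q:ℝ) * P ≤ (q:ℝ) * ((1-x)*(1-x^2)) :=
      mul_le_mul_of_nonneg_left hPhigh (by linarith)
    refine lt_of_le_of_lt h1 ?_
    have h2 : (q:ℝ) * (1 - x) = (q:ℝ) - 1 := by
      rw [mul_sub, mul_one, mul_comm ((q:ℝ)) x, hxq]
    have h3 : 1 - x^2 < 1 := by nlinarith
    have h4 : (0:ℝ) < (q:ℝ) * (1 - x) := by rw [h2]; linarith
    calc (q:ℝ) * ((1-x)*(1-x^2)) = ((q:ℝ)*(1-x)) * (1-x^2) := by ring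
      _ < ((q:ℝ)*(1-x)) * 1 := by exact mul_lt_mul_of_pos_left h3 h4
      _ = (q:ℝ) - 1 := by rw [mul_one, h2]
end

section
/- Let $R$ be a complete discrete valuation ring with uniformizer $\pi$, $\tilde{K}$ a finite extension of its fraction field $K$ with ring of integers $\tilde{R}$, and let $f : \tilde{R}^d \to \tilde{R}^r$ be a surjective $\tilde{R}$-linear map. Then for every nonnegative integer $v$, the Haar-measure probability that a uniformly random $x \in R^d$ satisfies $f(x) \in \pi^v \tilde{R}^r$ is at most $q^{-rv}$, where $q$ is the cardinality of the residue field of $R$. -/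
open MeasureTheory
open scoped Pointwise ENNReal

section Aux

variable {R Rt : Type*} [CommRing R] [CommRing Rt] [Algebra R Rt] {d r : ℕ}

/-- auxiliary additive map -/
def auxF (f : (Fin d → Rt) →ₗ[Rt] (Fin r → Rt)) : (Fin d → R) →+ (Fin r → Rt) where
  toFun x := f (fun j => algebraMap R Rt (x j))
  map_zero' := by
    show f (fun j => algebraMap R Rt ((0 : Fin d → R) j)) = 0
    have h0 : (fun j : Fin d => algebraMap R Rt ((0 : Fin d → R) j)) = 0 := by
      funext j; simp
    rw [h0, map_zero]
  map_add' x y := by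
    show f (fun j => algebraMap R Rt ((x + y) j))
        = f (fun j => algebraMap R Rt (x j)) + f (fun j => algebraMap R Rt (y j))
    have h0 : (fun j : Fin d => algebraMap R Rt ((x + y) j))
        = (fun j => algebraMap R Rt (x j)) + (fun j => algebraMap R Rt (y j)) := by
      funext j; simp [map_add]
    rw [h0, map_add]

lemma auxF_apply (f : (Fin d → Rt) →ₗ[Rt] (Fin r → Rt)) (x : Fin d → R) :
    auxF f x = f (fun j => algebraMap R Rt (x j)) := rfl

lemma auxF_smul (f : (Fin d → Rt) →ₗ[Rt] (Fin r → Rt)) (a : R) (x : Fin d → R) :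
    auxF f (a • x) = algebraMap R Rt a • auxF f x := by
  rw [auxF_apply, auxF_apply, ← f.map_smul]
  congr 1
  funext j
  simp [Algebra.smul_def, map_mul]

/-- the subgroup of `R^d` of points mapping into `π^i Rt^r` -/
def auxG (π : R) (f : (Fin d → Rt) →ₗ[Rt] (Fin r → Rt)) (i : ℕ) : AddSubgroup (Fin d → R) :=
  AddSubgroup.comap (auxF f)
    (AddSubgroup.pi Set.univ fun _ => (Ideal.span {algebraMap R Rt π ^ i}).toAddSubgroup)

lemma mem_auxG (π : R) (f : (Fin d → Rt) →ₗ[Rt] (Fin r → Rt)) (i : ℕ) (x : Fin d → R) :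
    x ∈ auxG π f i ↔ ∀ l, auxF f x l ∈ Ideal.span {algebraMap R Rt π ^ i} := by
  simp [auxG, AddSubgroup.mem_comap, AddSubgroup.mem_pi]

lemma auxG_le (π : R) (f : (Fin d → Rt) →ₗ[Rt] (Fin r → Rt)) (i : ℕ) :
    auxG π f (i + 1) ≤ auxG π f i := by
  intro x hx
  rw [mem_auxG] at hx ⊢
  intro l
  have h := hx l
  rw [Ideal.mem_span_singleton'] at h ⊢
  obtain ⟨c, hc⟩ := h
  exact ⟨c * algebraMap R Rt π, by rw [← hc]; ring⟩

lemma auxG_smul_mem (π : R) (f : (Fin d → Rt) →ₗ[Rt] (Fin r → Rt)) (i : ℕ) (a : R)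
    {x : Fin d → R} (hx : x ∈ auxG π f i) : a • x ∈ auxG π f i := by
  rw [mem_auxG] at hx ⊢
  intro l
  rw [auxF_smul]
  have h := hx l
  rw [Ideal.mem_span_singleton'] at h ⊢
  obtain ⟨c, hc⟩ := h
  exact ⟨algebraMap R Rt a * c, by rw [Pi.smul_apply, smul_eq_mul, ← hc]; ring⟩

end Aux

section Measure

lemma haar_open_addSubgroup {X : Type*} [AddCommGroup X] [TopologicalSpace X]
    [IsTopologicalAddGroup X] [CompactSpace X] [MeasurableSpace X]
    (μ : Measure X) [μ.IsAddHaarMeasure] [IsProbabilityMeasure μ]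
    (Γ : AddSubgroup X) (hΓ : IsOpen (Γ : Set X))
    (hmeasv : ∀ t : X, MeasurableSet (t +ᵥ (Γ : Set X))) :
    Γ.index ≠ 0 ∧ (μ (Γ : Set X)).toReal = ((Γ.index : ℝ))⁻¹ := by
  haveI : Finite (X ⧸ Γ) := AddSubgroup.quotient_finite_of_isOpen Γ hΓ
  letI : Fintype (X ⧸ Γ) := Fintype.ofFinite _
  have hmeas : MeasurableSet (Γ : Set X) := by
    have h0 := hmeasv 0
    rwa [zero_vadd] at h0
  have hcover : ⋃ t : X ⧸ Γ, ((Quotient.out t) +ᵥ (Γ : Set X)) = Set.univ := by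
    ext x
    simp only [Set.mem_iUnion, Set.mem_univ, iff_true]
    refine ⟨QuotientAddGroup.mk x, ?_⟩
    have h1 : (QuotientAddGroup.mk (Quotient.out (QuotientAddGroup.mk x : X ⧸ Γ)) : X ⧸ Γ)
        = QuotientAddGroup.mk x := QuotientAddGroup.out_eq' _
    rw [QuotientAddGroup.eq] at h1
    rw [Set.mem_vadd_set_iff_neg_vadd_mem]
    exact h1
  have hdisj : Pairwise (Function.onFun Disjoint
      fun t : X ⧸ Γ => (Quotient.out t) +ᵥ (Γ : Set X)) := by
    intro t t' hne
    rw [Function.onFun, Set.disjoint_left]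
    intro x hx hx'
    apply hne
    have key : ∀ s : X ⧸ Γ, x ∈ (Quotient.out s) +ᵥ (Γ : Set X) →
        s = QuotientAddGroup.mk x := by
      intro s hs
      rw [Set.mem_vadd_set_iff_neg_vadd_mem] at hs
      have : (QuotientAddGroup.mk (Quotient.out s) : X ⧸ Γ) = QuotientAddGroup.mk x :=
        QuotientAddGroup.eq.mpr hs
      rwa [QuotientAddGroup.out_eq'] at this
    rw [key t hx, key t' hx']
  have hvadd : ∀ t : X ⧸ Γ, μ ((Quotient.out t) +ᵥ (Γ : Set X)) = μ (Γ : Set X) :=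
    fun t => measure_vadd μ _ _
  have hsum : μ Set.univ = ∑ t : X ⧸ Γ, μ ((Quotient.out t) +ᵥ (Γ : Set X)) := by
    rw [← hcover, measure_iUnion hdisj (fun t => hmeasv _), tsum_fintype]
  rw [measure_univ] at hsum
  simp only [hvadd] at hsum
  rw [Finset.sum_const, Finset.card_univ] at hsum
  have hidx : Γ.index = Fintype.card (X ⧸ Γ) := by
    rw [AddSubgroup.index_eq_card, Nat.card_eq_fintype_card]
  have hne : Γ.index ≠ 0 := by rw [hidx]; exact Fintype.card_ne_zero
  refine ⟨hne, ?_⟩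
  have hmul : ((Γ.index : ℝ≥0∞)) * μ (Γ : Set X) = 1 := by
    rw [hidx, ← nsmul_eq_mul]; exact hsum.symm
  have hμ : μ (Γ : Set X) = ((Γ.index : ℝ≥0∞))⁻¹ := by
    rw [← one_mul (μ (Γ : Set X)),
      ← ENNReal.inv_mul_cancel (show (Γ.index : ℝ≥0∞) ≠ 0 by exact_mod_cast hne)
        (ENNReal.natCast_ne_top _), mul_assoc, hmul, mul_one]
  rw [hμ, ENNReal.toReal_inv]
  norm_num

lemma measurable_vadd_coset {X : Type*} [AddCommGroup X] [TopologicalSpace X]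
    [IsTopologicalAddGroup X] [CompactSpace X] [MeasurableSpace X]
    (H Γ : AddSubgroup X) (hHo : IsOpen (H : Set X))
    (hHm : ∀ t : X, MeasurableSet (t +ᵥ (H : Set X)))
    (hle : H ≤ Γ) (t : X) : MeasurableSet (t +ᵥ (Γ : Set X)) := by
  haveI : Finite (X ⧸ H) := AddSubgroup.quotient_finite_of_isOpen H hHo
  set A := t +ᵥ (Γ : Set X) with hA
  have hsat : ∀ a ∈ A, ∀ h ∈ H, a + h ∈ A := by
    rintro a ⟨g, hg, rfl⟩ h hh
    exact ⟨g + h, Γ.add_mem hg (hle hh), by simp only [vadd_eq_add]; abel⟩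
  have hrepr : A = ⋃ (q : X ⧸ H) (_ : Quotient.out q ∈ A),
      (Quotient.out q +ᵥ (H : Set X)) := by
    ext x
    simp only [Set.mem_iUnion]
    constructor
    · intro hx
      refine ⟨QuotientAddGroup.mk x, ?_, ?_⟩
      · have h1 : (QuotientAddGroup.mk (Quotient.out (QuotientAddGroup.mk x : X ⧸ H)) : X ⧸ H)
            = QuotientAddGroup.mk x := QuotientAddGroup.out_eq' _
        rw [QuotientAddGroup.eq] at h1
        have h2 := hsat x hx _ (AddSubgroup.neg_mem H h1)
        have h3 : x + -(-Quotient.out (QuotientAddGroup.mk x : X ⧸ H) + x)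
            = Quotient.out (QuotientAddGroup.mk x : X ⧸ H) := by abel
        rwa [h3] at h2
      · have h1 : (QuotientAddGroup.mk (Quotient.out (QuotientAddGroup.mk x : X ⧸ H)) : X ⧸ H)
            = QuotientAddGroup.mk x := QuotientAddGroup.out_eq' _
        rw [QuotientAddGroup.eq] at h1
        rw [Set.mem_vadd_set_iff_neg_vadd_mem]
        exact h1
    · rintro ⟨q, hq, hx⟩
      rw [Set.mem_vadd_set_iff_neg_vadd_mem] at hx
      have h2 := hsat _ hq _ hx
      have h3 : Quotient.out q + (-Quotient.out q +ᵥ x) = x := by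
        rw [vadd_eq_add]; abel
      rwa [h3] at h2
  rw [hrepr]
  exact MeasurableSet.iUnion fun q => MeasurableSet.iUnion fun _ => hHm _

end Measure

lemma isOpen_auxG {R Rt : Type*} [CommRing R] [CommRing Rt] [Algebra R Rt]
    [TopologicalSpace R] [IsTopologicalRing R]
    (π : R) (hopen : ∀ n : ℕ, IsOpen ((Ideal.span {π} ^ n : Ideal R) : Set R))
    {d r : ℕ} (f : (Fin d → Rt) →ₗ[Rt] (Fin r → Rt)) (i : ℕ) :
    IsOpen ((auxG π f i : Set (Fin d → R))) := by
  apply AddSubgroup.isOpen_of_mem_nhds (g := 0)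
  have hHopen : IsOpen (Set.pi Set.univ
      fun _ : Fin d => ((Ideal.span {π} ^ i : Ideal R) : Set R)) :=
    isOpen_set_pi Set.finite_univ (fun j _ => hopen i)
  refine Filter.mem_of_superset (hHopen.mem_nhds ?_) ?_
  · intro j _
    exact (Ideal.span {π} ^ i).zero_mem
  · intro x hx
    rw [SetLike.mem_coe, mem_auxG]
    intro l
    have hx' : ∀ j, x j ∈ Ideal.span {π ^ i} := by
      intro j
      have h := hx j (Set.mem_univ j)
      rwa [← Ideal.span_singleton_pow]
    choose c hc using fun j => Ideal.mem_span_singleton'.mp (hx' j)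
    have hxc : (fun j => algebraMap R Rt (x j))
        = (algebraMap R Rt π ^ i) • (fun j => algebraMap R Rt (c j)) := by
      funext j
      rw [Pi.smul_apply, smul_eq_mul, ← hc j, map_mul, map_pow]; ring
    rw [auxF_apply, hxc, f.map_smul, Ideal.mem_span_singleton']
    exact ⟨f (fun j => algebraMap R Rt (c j)) l, by rw [Pi.smul_apply, smul_eq_mul]; ring⟩

set_option maxHeartbeats 1000000 in
lemma relindex_auxG {R Rt : Type*} [CommRing R] [IsDomain R] [IsLocalRing R]
    [Finite (R ⧸ IsLocalRing.maximalIdeal R)]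
    [CommRing Rt] [IsDomain Rt] [IsLocalRing Rt] [Algebra R Rt] [Module.Finite R Rt]
    (hinj : Function.Injective (algebraMap R Rt))
    (π : R) (hπ : Irreducible π) {d r : ℕ}
    (f : (Fin d → Rt) →ₗ[Rt] (Fin r → Rt)) (hf : Function.Surjective f) (i : ℕ)
    (hrel : (auxG π f (i + 1)).relIndex (auxG π f i) ≠ 0) :
    Nat.card (R ⧸ IsLocalRing.maximalIdeal R) ^ r ≤
      (auxG π f (i + 1)).relIndex (auxG π f i) := by
  classical
  set ι := algebraMap R Rt with hι
  set πt := ι π with hπt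
  have hπtne : πt ≠ 0 := fun h => hπ.ne_zero (hinj (h.trans (map_zero ι).symm))
  have cancel : ∀ {a b : Rt}, πt ^ i * a = πt ^ i * b → a = b :=
    fun h => mul_left_cancel₀ (pow_ne_zero _ hπtne) h
  haveI : Algebra.IsIntegral R Rt := Algebra.IsIntegral.of_finite R Rt
  have hcomap : (IsLocalRing.maximalIdeal Rt).comap ι = IsLocalRing.maximalIdeal R :=
    IsLocalRing.eq_maximalIdeal (Ideal.isMaximal_comap_of_isIntegral_of_isMaximal _)
  have hπtm : πt ∈ IsLocalRing.maximalIdeal Rt := by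
    have hm : π ∈ IsLocalRing.maximalIdeal R := hπ.not_isUnit
    rw [← hcomap] at hm
    exact hm
  -- the "division by πt^i" function
  have hex : ∀ (x : ↥(auxG π f i)) (l : Fin r), ∃ a : Rt,
      πt ^ i * a = auxF (R := R) f ↑x l := by
    intro x l
    have h := (mem_auxG π f i ↑x).mp x.2 l
    rw [Ideal.mem_span_singleton'] at h
    obtain ⟨a, ha⟩ := h
    exact ⟨a, by rw [mul_comm]; exact ha⟩
  choose y hy using hex
  have hyadd : ∀ x x' : ↥(auxG π f i), y (x + x') = y x + y x' := by
    intro x x'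
    funext l
    apply cancel
    rw [hy]
    show auxF f ((x : Fin d → R) + (x' : Fin d → R)) l = πt ^ i * ((y x + y x') l)
    rw [map_add, Pi.add_apply, ← hy, ← hy, Pi.add_apply]
    ring
  have hyzero : y 0 = 0 := by
    funext l
    apply cancel
    rw [hy]
    show auxF f ((0 : ↥(auxG π f i)) : Fin d → R) l = πt ^ i * ((0 : Fin r → Rt) l)
    rw [ZeroMemClass.coe_zero, map_zero]
    simp
  have hysmul : ∀ (a : R) (x : ↥(auxG π f i)),
      y ⟨a • ↑x, auxG_smul_mem π f i a x.2⟩ = ι a • y x := by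
    intro a x
    funext l
    apply cancel
    rw [hy]
    show auxF f (a • (x : Fin d → R)) l = πt ^ i * ((ι a • y x) l)
    rw [auxF_smul, Pi.smul_apply, Pi.smul_apply, smul_eq_mul, smul_eq_mul, ← hy]
    ring
  -- residue fields
  letI kF : Field (R ⧸ IsLocalRing.maximalIdeal R) := Ideal.Quotient.field _
  letI ktF : Field (Rt ⧸ IsLocalRing.maximalIdeal Rt) := Ideal.Quotient.field _
  have hcle : IsLocalRing.maximalIdeal R ≤ (IsLocalRing.maximalIdeal Rt).comap ι :=
    le_of_eq hcomap.symm
  letI : Algebra (R ⧸ IsLocalRing.maximalIdeal R) (Rt ⧸ IsLocalRing.maximalIdeal Rt) :=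
    (Ideal.quotientMap (IsLocalRing.maximalIdeal Rt) ι hcle).toAlgebra
  have halgmap : ∀ a : R,
      algebraMap (R ⧸ IsLocalRing.maximalIdeal R) (Rt ⧸ IsLocalRing.maximalIdeal Rt)
        (Ideal.Quotient.mk _ a) = Ideal.Quotient.mk _ (ι a) := by
    intro a
    rw [RingHom.algebraMap_toAlgebra]
    exact Ideal.quotientMap_mk
  -- the map to the residue field power
  set ψfun : ↥(auxG π f i) → (Fin r → Rt ⧸ IsLocalRing.maximalIdeal Rt) :=
    fun x l => Ideal.Quotient.mk _ (y x l) with hψfun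
  let V : Submodule (R ⧸ IsLocalRing.maximalIdeal R)
      (Fin r → Rt ⧸ IsLocalRing.maximalIdeal Rt) :=
  { carrier := Set.range ψfun
    zero_mem' := ⟨0, by
      funext l
      show Ideal.Quotient.mk _ (y 0 l) = (0 : Fin r → Rt ⧸ IsLocalRing.maximalIdeal Rt) l
      rw [hyzero]
      simp⟩
    add_mem' := by
      rintro w w' ⟨x, rfl⟩ ⟨x', rfl⟩
      refine ⟨x + x', ?_⟩
      funext l
      show Ideal.Quotient.mk _ (y (x + x') l) = (ψfun x + ψfun x') l
      rw [hyadd, Pi.add_apply, Pi.add_apply, map_add]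
    smul_mem' := by
      intro c w hw
      obtain ⟨x, rfl⟩ := hw
      obtain ⟨a, rfl⟩ := Ideal.Quotient.mk_surjective c
      refine ⟨⟨a • ↑x, auxG_smul_mem π f i a x.2⟩, ?_⟩
      funext l
      show Ideal.Quotient.mk _ (y ⟨a • ↑x, auxG_smul_mem π f i a x.2⟩ l)
          = ((Ideal.Quotient.mk _ a) • ψfun x) l
      rw [hysmul]
      rw [Pi.smul_apply, Pi.smul_apply, smul_eq_mul, map_mul, Algebra.smul_def, halgmap] }
  -- bundle ψ as an additive hom
  let ψ : ↥(auxG π f i) →+ (Fin r → Rt ⧸ IsLocalRing.maximalIdeal Rt) :=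
  { toFun := ψfun
    map_zero' := by
      funext l
      show Ideal.Quotient.mk _ (y 0 l) = (0 : Fin r → Rt ⧸ IsLocalRing.maximalIdeal Rt) l
      rw [hyzero]
      simp
    map_add' := by
      intro x x'
      funext l
      show Ideal.Quotient.mk _ (y (x + x') l) = (ψfun x + ψfun x') l
      rw [hyadd, Pi.add_apply, Pi.add_apply, map_add] }
  -- the kernel contains the subgroup corresponding to level i+1
  have hker : (auxG π f (i + 1)).addSubgroupOf (auxG π f i) ≤ ψ.ker := by
    intro x hx
    rw [AddSubgroup.mem_addSubgroupOf] at hx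
    rw [AddMonoidHom.mem_ker]
    have hmem : ∀ l, y x l ∈ IsLocalRing.maximalIdeal Rt := by
      intro l
      have h := (mem_auxG π f (i + 1) ↑x).mp hx l
      rw [Ideal.mem_span_singleton'] at h
      obtain ⟨c, hc⟩ := h
      have heq : πt ^ i * y x l = πt ^ i * (c * πt) := by
        rw [hy, ← hc]
        ring
      rw [cancel heq]
      exact Ideal.mul_mem_left _ c hπtm
    funext l
    show Ideal.Quotient.mk _ (y x l) = (0 : Fin r → Rt ⧸ IsLocalRing.maximalIdeal Rt) l
    rw [show (0 : Fin r → Rt ⧸ IsLocalRing.maximalIdeal Rt) l = 0 from rfl]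
    exact Ideal.Quotient.eq_zero_iff_mem.mpr (hmem l)
  -- finiteness of the residue field of Rt
  haveI hfinRt : Module.Finite Rt (Rt ⧸ IsLocalRing.maximalIdeal Rt) :=
    Module.Finite.of_surjective (Algebra.linearMap Rt (Rt ⧸ IsLocalRing.maximalIdeal Rt))
      (by rw [show ⇑(Algebra.linearMap Rt (Rt ⧸ IsLocalRing.maximalIdeal Rt))
              = ⇑(Ideal.Quotient.mk (IsLocalRing.maximalIdeal Rt)) from
            congrArg DFunLike.coe (Ideal.Quotient.algebraMap_eq _)]
          exact Ideal.Quotient.mk_surjective)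
  haveI hfinR : Module.Finite R (Rt ⧸ IsLocalRing.maximalIdeal Rt) :=
    Module.Finite.trans Rt _
  haveI htower : IsScalarTower R (R ⧸ IsLocalRing.maximalIdeal R)
      (Rt ⧸ IsLocalRing.maximalIdeal Rt) := by
    refine IsScalarTower.of_algebraMap_eq' ?_
    apply RingHom.ext
    intro a
    rw [RingHom.comp_apply, IsScalarTower.algebraMap_apply R Rt
      (Rt ⧸ IsLocalRing.maximalIdeal Rt), Ideal.Quotient.algebraMap_eq,
      Ideal.Quotient.algebraMap_eq, halgmap]
  haveI : Module.Finite (R ⧸ IsLocalRing.maximalIdeal R)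
      (Rt ⧸ IsLocalRing.maximalIdeal Rt) :=
    Module.Finite.of_restrictScalars_finite R _ _
  haveI : Finite (Rt ⧸ IsLocalRing.maximalIdeal Rt) :=
    Module.finite_of_finite (R ⧸ IsLocalRing.maximalIdeal R)
  haveI : Finite ↥V := Subtype.finite
  letI : Fintype (R ⧸ IsLocalRing.maximalIdeal R) := Fintype.ofFinite _
  letI : Fintype ↥V := Fintype.ofFinite _
  have hcardV : Nat.card ↥V = Nat.card (R ⧸ IsLocalRing.maximalIdeal R)
      ^ Module.finrank (R ⧸ IsLocalRing.maximalIdeal R) ↥V := by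
    rw [Nat.card_eq_fintype_card, Nat.card_eq_fintype_card, Module.card_eq_pow_finrank (K := R ⧸ IsLocalRing.maximalIdeal R) (V := ↥V)]
  -- the dimension bound
  set n := Module.finrank (R ⧸ IsLocalRing.maximalIdeal R) ↥V with hn
  let b := Module.finBasis (R ⧸ IsLocalRing.maximalIdeal R) ↥V
  let s : Set (Fin r → Rt ⧸ IsLocalRing.maximalIdeal Rt) :=
    Set.range fun j : Fin n => (b j : Fin r → Rt ⧸ IsLocalRing.maximalIdeal Rt)
  have hVspan : Submodule.span (R ⧸ IsLocalRing.maximalIdeal R) s = V := by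
    have h1 : Submodule.map V.subtype
          (Submodule.span (R ⧸ IsLocalRing.maximalIdeal R) (Set.range ⇑b))
        = Submodule.span (R ⧸ IsLocalRing.maximalIdeal R) (V.subtype '' Set.range ⇑b) :=
      Submodule.map_span _ _
    rw [b.span_eq, Submodule.map_top, Submodule.range_subtype] at h1
    rw [show s = V.subtype '' Set.range ⇑b by rw [← Set.range_comp]; rfl]
    exact h1.symm
  have hVle : (V : Set (Fin r → Rt ⧸ IsLocalRing.maximalIdeal Rt))
      ⊆ (Submodule.span (Rt ⧸ IsLocalRing.maximalIdeal Rt) s :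
          Set (Fin r → Rt ⧸ IsLocalRing.maximalIdeal Rt)) := by
    rw [← hVspan]
    exact fun x hx => Submodule.span_le_restrictScalars (R ⧸ IsLocalRing.maximalIdeal R)
      (Rt ⧸ IsLocalRing.maximalIdeal Rt) s hx
  -- generators coming from surjectivity of f
  have hsingle : ∀ j : Fin d, (fun j' => ι ((Pi.single j (1 : R) : Fin d → R) j')) = Pi.single j (1 : Rt) := by
    intro j
    funext j'
    simp [Pi.single_apply, apply_ite ι]
  have hgen : ∀ j : Fin d,
      (fun l => Ideal.Quotient.mk (IsLocalRing.maximalIdeal Rt) (f (Pi.single j 1) l)) ∈ V := by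
    intro j
    have hFx : auxF (R := R) f (π ^ i • (Pi.single j 1 : Fin d → R))
        = πt ^ i • f (Pi.single j (1 : Rt)) := by
      rw [auxF_smul, auxF_apply, hsingle, map_pow]
    have hxmem : (π ^ i • (Pi.single j 1 : Fin d → R)) ∈ auxG π f i := by
      rw [mem_auxG]
      intro l
      rw [Ideal.mem_span_singleton', hFx]
      exact ⟨f (Pi.single j (1 : Rt)) l, by rw [Pi.smul_apply, smul_eq_mul]; ring⟩
    have hyx : y ⟨π ^ i • (Pi.single j 1 : Fin d → R), hxmem⟩ = f (Pi.single j (1 : Rt)) := by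
      funext l
      apply cancel
      rw [hy]
      show auxF f (π ^ i • (Pi.single j 1 : Fin d → R)) l = _
      rw [hFx, Pi.smul_apply, smul_eq_mul]
    exact ⟨⟨π ^ i • (Pi.single j 1 : Fin d → R), hxmem⟩, by
      funext l
      show Ideal.Quotient.mk _ (y ⟨π ^ i • (Pi.single j 1 : Fin d → R), hxmem⟩ l) = _
      rw [hyx]⟩
  have hgent : Submodule.span (Rt ⧸ IsLocalRing.maximalIdeal Rt) (Set.range fun j : Fin d =>
      (fun l => Ideal.Quotient.mk (IsLocalRing.maximalIdeal Rt) (f (Pi.single j 1) l))) = ⊤ := by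
    set S := Set.range fun j : Fin d =>
      (fun l => Ideal.Quotient.mk (IsLocalRing.maximalIdeal Rt) (f (Pi.single j 1) l)) with hS
    let ρl : (Fin r → Rt) →ₗ[Rt] (Fin r → Rt ⧸ IsLocalRing.maximalIdeal Rt) :=
      LinearMap.pi fun l =>
        (Algebra.linearMap Rt (Rt ⧸ IsLocalRing.maximalIdeal Rt)).comp (LinearMap.proj l)
    have hρapp : ∀ (u : Fin r → Rt) (l : Fin r),
        ρl u l = Ideal.Quotient.mk (IsLocalRing.maximalIdeal Rt) (u l) := by
      intro u l
      show algebraMap Rt _ (u l) = _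
      rw [Ideal.Quotient.algebraMap_eq]
    have hρsurj : Function.Surjective ρl := by
      intro w
      have : ∀ l, ∃ t : Rt, Ideal.Quotient.mk (IsLocalRing.maximalIdeal Rt) t = w l :=
        fun l => Ideal.Quotient.mk_surjective (w l)
      choose u hu using this
      exact ⟨u, by funext l; rw [hρapp]; exact hu l⟩
    have hspanf : Submodule.span Rt (Set.range fun j : Fin d => f (Pi.single j 1)) = ⊤ := by
      have hbf := (Pi.basisFun Rt (Fin d)).span_eq
      have hrf : LinearMap.range f = ⊤ := LinearMap.range_eq_top.mpr hf
      have hcomp : (⇑f ∘ ⇑(Pi.basisFun Rt (Fin d))) = fun j : Fin d => f (Pi.single j 1) := by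
        funext j
        rw [Function.comp_apply, Pi.basisFun_apply]
      rw [← hrf, LinearMap.range_eq_map, ← hbf, Submodule.map_span, ← Set.range_comp, hcomp]
    have h2 : Submodule.map ρl (Submodule.span Rt
        (Set.range fun j : Fin d => f (Pi.single j 1))) = ⊤ := by
      rw [hspanf, Submodule.map_top, LinearMap.range_eq_top.mpr hρsurj]
    rw [Submodule.map_span, ← Set.range_comp] at h2
    have h3 : (⇑ρl ∘ fun j : Fin d => f (Pi.single j 1)) = fun j : Fin d =>
        (fun l => Ideal.Quotient.mk (IsLocalRing.maximalIdeal Rt) (f (Pi.single j 1) l)) := by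
      funext j
      funext l
      exact hρapp _ l
    rw [h3] at h2
    have h4 := Submodule.restrictScalars_span Rt (Rt ⧸ IsLocalRing.maximalIdeal Rt)
      (by rw [Ideal.Quotient.algebraMap_eq]; exact Ideal.Quotient.mk_surjective) S
    have h5 : Submodule.restrictScalars Rt
        (Submodule.span (Rt ⧸ IsLocalRing.maximalIdeal Rt) S) = ⊤ := h4.trans h2
    rw [Submodule.eq_top_iff']
    intro x
    have hx : x ∈ Submodule.restrictScalars Rt
        (Submodule.span (Rt ⧸ IsLocalRing.maximalIdeal Rt) S) := by
      rw [h5]; trivial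
    exact hx
  have htop : Submodule.span (Rt ⧸ IsLocalRing.maximalIdeal Rt) s = ⊤ := by
    rw [eq_top_iff, ← hgent]
    refine Submodule.span_le.mpr ?_
    rintro w ⟨j, rfl⟩
    exact hVle (hgen j)
  have hrn : r ≤ n := by
    letI : Fintype s := Set.fintypeRange _
    have h7 : Module.finrank (Rt ⧸ IsLocalRing.maximalIdeal Rt)
        ↥(Submodule.span (Rt ⧸ IsLocalRing.maximalIdeal Rt) s) ≤ s.toFinset.card :=
      finrank_span_le_card s
    rw [htop, finrank_top] at h7
    have h6 : Module.finrank (Rt ⧸ IsLocalRing.maximalIdeal Rt)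
        (Fin r → Rt ⧸ IsLocalRing.maximalIdeal Rt) = r := by
      rw [Module.finrank_pi, Fintype.card_fin]
    have h8 : s.toFinset.card ≤ n := by
      rw [Set.toFinset_range]
      exact Finset.card_image_le.trans (by simp)
    omega
  -- put everything together
  have hcard1 : Nat.card ↥V = Nat.card ↥ψ.range :=
    Nat.card_congr (Equiv.subtypeEquivRight fun x => Iff.rfl)
  have hcard2 : Nat.card (↥(auxG π f i) ⧸ ψ.ker) = Nat.card ↥ψ.range :=
    Nat.card_congr (QuotientAddGroup.quotientKerEquivRange ψ).toEquiv
  have hdvd : ψ.ker.index ∣ ((auxG π f (i + 1)).addSubgroupOf (auxG π f i)).index :=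
    AddSubgroup.index_dvd_of_le hker
  calc Nat.card (R ⧸ IsLocalRing.maximalIdeal R) ^ r
      ≤ Nat.card (R ⧸ IsLocalRing.maximalIdeal R) ^ n :=
        Nat.pow_le_pow_right Nat.card_pos hrn
    _ = Nat.card ↥V := hcardV.symm
    _ = Nat.card ↥ψ.range := hcard1
    _ = Nat.card (↥(auxG π f i) ⧸ ψ.ker) := hcard2.symm
    _ = ψ.ker.index := (AddSubgroup.index_eq_card _).symm
    _ ≤ ((auxG π f (i + 1)).addSubgroupOf (auxG π f i)).index :=
        Nat.le_of_dvd (Nat.pos_of_ne_zero hrel) hdvd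
    _ = (auxG π f (i + 1)).relIndex (auxG π f i) := rfl

lemma index_auxG {R Rt : Type*} [CommRing R] [IsDomain R] [IsLocalRing R]
    [Finite (R ⧸ IsLocalRing.maximalIdeal R)]
    [CommRing Rt] [IsDomain Rt] [IsLocalRing Rt] [Algebra R Rt] [Module.Finite R Rt]
    (hinj : Function.Injective (algebraMap R Rt))
    (π : R) (hπ : Irreducible π) {d r : ℕ}
    (f : (Fin d → Rt) →ₗ[Rt] (Fin r → Rt)) (hf : Function.Surjective f)
    (hfin : ∀ i : ℕ, (auxG π f i).index ≠ 0) (v : ℕ) :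
    Nat.card (R ⧸ IsLocalRing.maximalIdeal R) ^ (r * v) ≤ (auxG π f v).index := by
  induction v with
  | zero => simpa using Nat.one_le_iff_ne_zero.mpr (hfin 0)
  | succ v ih =>
    have hle := auxG_le π f v
    have hmul := AddSubgroup.relIndex_mul_index hle
    have hrelne : (auxG π f (v + 1)).relIndex (auxG π f v) ≠ 0 := by
      intro h0
      exact hfin (v + 1) (by rw [← hmul, h0, zero_mul])
    have hrel := relindex_auxG hinj π hπ f hf v hrelne
    calc Nat.card (R ⧸ IsLocalRing.maximalIdeal R) ^ (r * (v + 1))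
        = Nat.card (R ⧸ IsLocalRing.maximalIdeal R) ^ (r * v)
          * Nat.card (R ⧸ IsLocalRing.maximalIdeal R) ^ r := by
          rw [Nat.mul_succ, pow_add]
      _ ≤ (auxG π f v).index * (auxG π f (v + 1)).relIndex (auxG π f v) :=
          Nat.mul_le_mul ih hrel
      _ = (auxG π f (v + 1)).index := by rw [mul_comm]; exact hmul

/-- For a surjective `R̃`-linear map `f : R̃^d → R̃^r`, where `R̃` is the ring of integers
of a finite extension of the fraction field of a complete DVR `R` with finite residue
field of cardinality `q`, the Haar probability that a random `x ∈ R^d` satisfies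
`f x ∈ π^v R̃^r` is at most `q^{-rv}`. -/
theorem stmt11 {R : Type*} [CommRing R] [IsDomain R] [IsDiscreteValuationRing R]
    [TopologicalSpace R] [IsTopologicalRing R] [CompactSpace R]
    [MeasurableSpace R] [BorelSpace R]
    [Finite (R ⧸ IsLocalRing.maximalIdeal R)]
    (π : R) (hπ : Irreducible π)
    (hopen : ∀ n : ℕ, IsOpen ((Ideal.span {π} ^ n : Ideal R) : Set R))
    {Rt : Type*} [CommRing Rt] [IsDomain Rt] [IsDiscreteValuationRing Rt]
    [Algebra R Rt] [Module.Finite R Rt]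
    (hinj : Function.Injective (algebraMap R Rt))
    {d r : ℕ}
    (μ : Measure (Fin d → R)) [μ.IsAddHaarMeasure] [IsProbabilityMeasure μ]
    (f : (Fin d → Rt) →ₗ[Rt] (Fin r → Rt)) (hf : Function.Surjective f)
    (v : ℕ) :
    (μ {x | ∀ i, f (fun j => algebraMap R Rt (x j)) i ∈
        Ideal.span {algebraMap R Rt π ^ v}}).toReal ≤
      ((Nat.card (R ⧸ IsLocalRing.maximalIdeal R) : ℝ))⁻¹ ^ (r * v) := by
  classical
  have hsetΓ : {x : Fin d → R | ∀ i, f (fun j => algebraMap R Rt (x j)) i ∈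
      Ideal.span {algebraMap R Rt π ^ v}} = ((auxG π f v : AddSubgroup (Fin d → R)) :
        Set (Fin d → R)) := by
    ext x
    simp only [Set.mem_setOf_eq, SetLike.mem_coe, mem_auxG, auxF_apply]
  have hopenΓ : IsOpen ((auxG π f v : AddSubgroup (Fin d → R)) : Set (Fin d → R)) :=
    isOpen_auxG π hopen f v
  have hfin : ∀ i : ℕ, (auxG π f i).index ≠ 0 := by
    intro i
    haveI : Finite ((Fin d → R) ⧸ auxG π f i) :=
      AddSubgroup.quotient_finite_of_isOpen _ (isOpen_auxG π hopen f i)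
    haveI := AddSubgroup.finiteIndex_of_finite_quotient (H := auxG π f i)
    exact AddSubgroup.FiniteIndex.index_ne_zero
  set Hsub : AddSubgroup (Fin d → R) :=
    AddSubgroup.pi Set.univ (fun _ => (Ideal.span {π} ^ v).toAddSubgroup) with hHsub
  have hHcoe : (Hsub : Set (Fin d → R))
      = Set.pi Set.univ (fun _ => ((Ideal.span {π} ^ v : Ideal R) : Set R)) :=
    AddSubgroup.coe_pi _ _
  have hHo : IsOpen (Hsub : Set (Fin d → R)) := by
    rw [hHcoe]
    exact isOpen_set_pi Set.finite_univ fun j _ => hopen v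
  have hHm : ∀ t : Fin d → R, MeasurableSet (t +ᵥ (Hsub : Set (Fin d → R))) := by
    intro t
    have htr : t +ᵥ (Hsub : Set (Fin d → R)) = Set.pi Set.univ
        (fun j => t j +ᵥ ((Ideal.span {π} ^ v : Ideal R) : Set R)) := by
      rw [hHcoe]
      ext x
      simp [Set.mem_vadd_set_iff_neg_vadd_mem, Set.mem_pi, vadd_eq_add]
    rw [htr]
    exact MeasurableSet.pi Set.countable_univ fun j _ => ((hopen v).vadd (t j)).measurableSet
  have hHle : Hsub ≤ auxG π f v := by
    intro x hx
    have hx' : ∀ j, x j ∈ Ideal.span {π ^ v} := by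
      intro j
      have h := (AddSubgroup.mem_pi _).mp hx j (Set.mem_univ j)
      rw [Submodule.mem_toAddSubgroup] at h
      rwa [← Ideal.span_singleton_pow]
    rw [mem_auxG]
    intro l
    choose c hc using fun j => Ideal.mem_span_singleton'.mp (hx' j)
    have hxc : (fun j => algebraMap R Rt (x j))
        = (algebraMap R Rt π ^ v) • (fun j => algebraMap R Rt (c j)) := by
      funext j
      rw [Pi.smul_apply, smul_eq_mul, ← hc j, map_mul, map_pow]; ring
    rw [auxF_apply, hxc, f.map_smul, Ideal.mem_span_singleton']
    exact ⟨f (fun j => algebraMap R Rt (c j)) l, by rw [Pi.smul_apply, smul_eq_mul]; ring⟩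
  obtain ⟨hidxne, htoReal⟩ := haar_open_addSubgroup μ (auxG π f v) hopenΓ
    (fun t => measurable_vadd_coset Hsub (auxG π f v) hHo hHm hHle t)
  rw [hsetΓ, htoReal]
  have hidx := index_auxG hinj π hπ f hf hfin v
  rw [inv_pow, ← Nat.cast_pow]
  have hpos : (0 : ℝ) < (Nat.card (R ⧸ IsLocalRing.maximalIdeal R) ^ (r * v) : ℕ) := by
    have : 0 < Nat.card (R ⧸ IsLocalRing.maximalIdeal R) ^ (r * v) :=
      Nat.pow_pos Nat.card_pos
    exact_mod_cast this
  apply inv_anti₀ hpos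
  exact_mod_cast hidx
end

section
/- Let $h : R^d \to R^r$ be a surjective $R$-linear map, where $R$ is a complete discrete valuation ring with uniformizer $\pi$ and finite residue field of cardinality $q$. Then for every integer $v \geq 0$, the probability (with respect to the Haar probability measure on $R^d$) that $h(x) \in \pi^v R^r$ equals $q^{-rv}$. -/
open MeasureTheory

/-- For a surjective linear map `h : R^d → R^r` over a complete DVR `R` with finite
residue field of cardinality `q`, the Haar probability of `{x | h x ∈ π^v R^r}` is
exactly `q^{-rv}`. -/
theorem stmt12 {R : Type*} [CommRing R] [IsDomain R] [IsDiscreteValuationRing R]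
    [TopologicalSpace R] [IsTopologicalRing R] [CompactSpace R] [MeasurableSpace R] [BorelSpace R]
    [Finite (R ⧸ IsLocalRing.maximalIdeal R)]
    (π : R) (hπ : Irreducible π)
    (hopen : ∀ n : ℕ, IsOpen ((Ideal.span {π} ^ n : Ideal R) : Set R))
    {d r : ℕ}
    (μ : Measure (Fin d → R)) [μ.IsAddHaarMeasure] [IsProbabilityMeasure μ]
    (h : (Fin d → R) →ₗ[R] (Fin r → R)) (hh : Function.Surjective h)
    (v : ℕ) :
    (μ {x | ∀ i, h x i ∈ Ideal.span {π ^ v}}).toReal =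
      ((Nat.card (R ⧸ IsLocalRing.maximalIdeal R) : ℝ))⁻¹ ^ (r * v) := by
  classical
  set q := Nat.card (R ⧸ IsLocalRing.maximalIdeal R) with hq
  set J : Ideal R := Ideal.span {π ^ v} with hJdef
  have hJ : J = IsLocalRing.maximalIdeal R ^ v := by
    rw [hJdef, ← Ideal.span_singleton_pow, hπ.maximalIdeal_eq]
  have hm_ne : IsLocalRing.maximalIdeal R ≠ ⊥ := by
    intro hbot
    exact IsDiscreteValuationRing.not_isField R (IsLocalRing.isField_iff_maximalIdeal_eq.mpr hbot)
  have hcardJ : Nat.card (R ⧸ J) = q ^ v := by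
    rw [hJ]
    have := cardQuot_pow_of_prime (S := R) (P := IsLocalRing.maximalIdeal R) hm_ne (i := v)
    rwa [Submodule.cardQuot_apply, Submodule.cardQuot_apply] at this
  have hq_pos : 0 < q := Nat.card_pos
  -- the pulled back submodule
  set P : Submodule R (Fin r → R) := Submodule.pi Set.univ fun _ => J with hPdef
  set S : Submodule R (Fin d → R) := LinearMap.ker (P.mkQ ∘ₗ h) with hSdef
  have hSmem : ∀ x, x ∈ S ↔ ∀ i, h x i ∈ J := by
    intro x
    simp [hSdef, LinearMap.mem_ker, Submodule.Quotient.mk_eq_zero, hPdef, Submodule.mem_pi]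
  have hSset : {x | ∀ i, h x i ∈ J} = (S : Set (Fin d → R)) := by
    ext x; simpa using (hSmem x).symm
  -- quotient equivalences and cardinality
  have hsurj : Function.Surjective (P.mkQ ∘ₗ h) :=
    (Submodule.mkQ_surjective P).comp hh
  have e1 : ((Fin d → R) ⧸ S) ≃ₗ[R] ((Fin r → R) ⧸ P) :=
    LinearMap.quotKerEquivOfSurjective _ hsurj
  have e2 : ((Fin r → R) ⧸ P) ≃ₗ[R] (Fin r → R ⧸ J) :=
    Submodule.quotientPi fun _ => J
  have hfinJ : Finite (R ⧸ J) := by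
    refine Nat.finite_of_card_ne_zero ?_
    rw [hcardJ]; positivity
  have hfinQ : Finite ((Fin d → R) ⧸ S) := by
    have : Finite (Fin r → R ⧸ J) := Pi.finite
    exact Finite.of_equiv _ (e1.trans e2).toEquiv.symm
  have hcardQ : Nat.card ((Fin d → R) ⧸ S) = q ^ (r * v) := by
    rw [Nat.card_congr (e1.trans e2).toEquiv]
    rw [Nat.card_fun]
    rw [hcardJ, Nat.card_eq_fintype_card, Fintype.card_fin, ← pow_mul, Nat.mul_comm]
  -- J is measurable in R
  have hJopen : IsOpen (J : Set R) := by
    have := hopen v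
    rwa [Ideal.span_singleton_pow] at this
  have hJmeas : MeasurableSet (J : Set R) := hJopen.measurableSet
  -- the box subgroup B = J^d, contained in S
  set B : Submodule R (Fin d → R) := Submodule.pi Set.univ fun _ => J with hBdef
  have hBS : B ≤ S := by
    intro x hx
    rw [hSmem]
    intro i
    have hx' : ∀ j, x j ∈ J := by
      intro j; exact Submodule.mem_pi.mp hx j (Set.mem_univ j)
    have hxsum : x = ∑ j, Pi.single j (x j) := by rw [Finset.univ_sum_single]
    have : h x = ∑ j, x j • h (Pi.single j 1) := by
      calc h x = h (∑ j, Pi.single j (x j)) := by rw [← hxsum]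
        _ = ∑ j, h (Pi.single j (x j)) := map_sum h _ _
        _ = ∑ j, x j • h (Pi.single j 1) := by
            refine Finset.sum_congr rfl fun j _ => ?_
            have : Pi.single j (x j) = x j • (Pi.single j 1 : Fin d → R) := by
              ext k
              by_cases hk : k = j
              · subst hk; simp
              · simp [Pi.single_eq_of_ne hk]
            rw [this, h.map_smul]
    rw [this]
    simp only [Finset.sum_apply, Pi.smul_apply, smul_eq_mul]
    exact Ideal.sum_mem J fun j _ => J.mul_mem_right _ (hx' j)
  have hfinB : Finite ((Fin d → R) ⧸ B) := by
    have : Finite (Fin d → R ⧸ J) := Pi.finite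
    exact Finite.of_equiv _ (Submodule.quotientPi fun _ : Fin d => J).toEquiv.symm
  -- fibers of the B-quotient map are measurable boxes
  have hBfibermeas : ∀ c : (Fin d → R) ⧸ B,
      MeasurableSet (Submodule.Quotient.mk ⁻¹' {c} : Set (Fin d → R)) := by
    intro c
    obtain ⟨x, rfl⟩ := Submodule.Quotient.mk_surjective B c
    have : ((Submodule.Quotient.mk (p := B)) ⁻¹' {Submodule.Quotient.mk x} : Set (Fin d → R)) =
        Set.pi Set.univ fun j => (fun s => s - x j) ⁻¹' (J : Set R) := by
      ext y
      simp only [Set.mem_preimage, Set.mem_singleton_iff, Set.mem_pi, Set.mem_univ,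
        forall_true_left, SetLike.mem_coe]
      rw [Submodule.Quotient.eq]
      constructor
      · intro hy j; exact Submodule.mem_pi.mp hy j (Set.mem_univ j)
      · intro hy; exact Submodule.mem_pi.mpr fun j _ => hy j
    rw [this]
    exact MeasurableSet.univ_pi fun j =>
      ((continuous_id.sub continuous_const).measurable) hJmeas
  -- any B-saturated set is measurable
  have satmeas : ∀ T : Set (Fin d → R), (∀ x ∈ T, ∀ y, y - x ∈ B → y ∈ T) →
      MeasurableSet T := by
    intro T hT
    have hTeq : T = ⋃ c ∈ (Submodule.Quotient.mk '' T : Set ((Fin d → R) ⧸ B)),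
        (Submodule.Quotient.mk ⁻¹' {c} : Set (Fin d → R)) := by
      ext y
      simp only [Set.mem_iUnion, Set.mem_preimage, Set.mem_singleton_iff, Set.mem_image,
        exists_prop]
      constructor
      · intro hy
        exact ⟨Submodule.Quotient.mk y, ⟨y, hy, rfl⟩, rfl⟩
      · rintro ⟨c, ⟨x, hx, rfl⟩, hc⟩
        refine hT x hx y ?_
        exact (Submodule.Quotient.eq B).mp hc
    rw [hTeq]
    have : Countable ((Fin d → R) ⧸ B) := Finite.to_countable
    exact MeasurableSet.biUnion (Set.to_countable _) fun c _ => hBfibermeas c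
  have hSmeas : MeasurableSet (S : Set (Fin d → R)) := by
    refine satmeas _ ?_
    intro x hx y hy
    have : y = (y - x) + x := by ring
    rw [SetLike.mem_coe] at hx ⊢
    rw [this]
    exact S.add_mem (hBS hy) hx
  -- fibers of the S-quotient map are measurable and have measure μ S
  have hfibermeas : ∀ c : (Fin d → R) ⧸ S,
      MeasurableSet (Submodule.Quotient.mk ⁻¹' {c} : Set (Fin d → R)) := by
    intro c
    obtain ⟨x, rfl⟩ := Submodule.Quotient.mk_surjective S c
    refine satmeas _ ?_
    intro a ha y hy
    simp only [Set.mem_preimage, Set.mem_singleton_iff] at ha ⊢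
    rw [Submodule.Quotient.eq] at ha ⊢
    have : y - x = (y - a) + (a - x) := by ring
    rw [this]
    exact S.add_mem (hBS hy) ha
  have hfiber : ∀ c : (Fin d → R) ⧸ S, μ (Submodule.Quotient.mk ⁻¹' {c}) = μ S := by
    intro c
    obtain ⟨x, rfl⟩ := Submodule.Quotient.mk_surjective S c
    have : ((Submodule.Quotient.mk (p := S)) ⁻¹' {Submodule.Quotient.mk x} : Set (Fin d → R)) =
        (fun y => -x + y) ⁻¹' (S : Set (Fin d → R)) := by
      ext y
      simp only [Set.mem_preimage, Set.mem_singleton_iff, SetLike.mem_coe]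
      rw [Submodule.Quotient.eq]
      constructor
      · intro hy; rwa [neg_add_eq_sub]
      · intro hy; rwa [neg_add_eq_sub] at hy
    rw [this, measure_preimage_add]
  have := Fintype.ofFinite ((Fin d → R) ⧸ S)
  have hcover : (Set.univ : Set (Fin d → R)) =
      ⋃ c : (Fin d → R) ⧸ S, Submodule.Quotient.mk ⁻¹' {c} := by
    ext x; simp
  have hone : (1 : ENNReal) = (q ^ (r * v) : ℕ) * μ S := by
    calc (1 : ENNReal) = μ Set.univ := (measure_univ).symm
      _ = μ (⋃ c : (Fin d → R) ⧸ S, Submodule.Quotient.mk ⁻¹' {c}) := by rw [← hcover]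
      _ = ∑' c : (Fin d → R) ⧸ S, μ (Submodule.Quotient.mk ⁻¹' {c}) :=
          measure_iUnion (pairwise_disjoint_fiber _) hfibermeas
      _ = ∑' _ : (Fin d → R) ⧸ S, μ S := by simp_rw [hfiber]
      _ = (Fintype.card ((Fin d → R) ⧸ S) : ℕ) * μ S := by
          rw [tsum_fintype]; simp [Finset.sum_const, nsmul_eq_mul]
      _ = (q ^ (r * v) : ℕ) * μ S := by
          rw [← Nat.card_eq_fintype_card, hcardQ]
  have hqne : ((q ^ (r * v) : ℕ) : ENNReal) ≠ 0 := by
    rw [Nat.cast_ne_zero]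
    positivity
  have hqnetop : ((q ^ (r * v) : ℕ) : ENNReal) ≠ ⊤ := ENNReal.natCast_ne_top _
  have hμS : μ S = ((q ^ (r * v) : ℕ) : ENNReal)⁻¹ := by
    calc μ ↑S = (((q ^ (r * v) : ℕ) : ENNReal)⁻¹ * ((q ^ (r * v) : ℕ) : ENNReal)) * μ ↑S := by
          rw [ENNReal.inv_mul_cancel hqne hqnetop, one_mul]
      _ = ((q ^ (r * v) : ℕ) : ENNReal)⁻¹ * (((q ^ (r * v) : ℕ) : ENNReal) * μ ↑S) := by
          rw [mul_assoc]
      _ = ((q ^ (r * v) : ℕ) : ENNReal)⁻¹ := by rw [← hone, mul_one]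
  rw [hSset, hμS]
  rw [ENNReal.toReal_inv]
  simp [inv_pow]
end

section
/- Let $R$ be a discrete valuation ring with valuation $v_R$, uniformizer $\pi$, and fraction field $K$. Let $M, M' \in M_d(R)$ be congruent modulo $\pi^N$, both admitting LU decompositions, and suppose that for each $i \leq d$, the valuation $W_i$ of the $i$-th principal minor of $M$ satisfies $W_i < N$. Then for all $i > j$ the principal minors of $M$ and $M'$ have equal valuations and $L(M)_{i,j} \equiv L(M')_{i,j} \pmod{\pi^{N - 2 W_j(M)}}$, where $L(M)$ denotes the unit lower triangular factor of the LU decomposition. -/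
open Matrix

private lemma aux_mul {S : Type*} [CommRing S] {d n : ℕ} (h : n ≤ d)
    (A B : Matrix (Fin d) (Fin d) S)
    (hB : ∀ p q : Fin d, q < p → B p q = 0) (r : Fin n → Fin d) :
    (A * B).submatrix r (Fin.castLE h) =
      A.submatrix r (Fin.castLE h) * B.submatrix (Fin.castLE h) (Fin.castLE h) := by
  ext p q
  simp only [Matrix.submatrix_apply, Matrix.mul_apply]
  have hmap : ∑ k : Fin n, A (r p) (Fin.castLE h k) * B (Fin.castLE h k) (Fin.castLE h q)
      = ∑ k ∈ (Finset.univ : Finset (Fin n)).map ⟨Fin.castLE h, Fin.castLE_injective h⟩,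
          A (r p) k * B k (Fin.castLE h q) := by
    rw [Finset.sum_map]; rfl
  rw [hmap]
  refine (Finset.sum_subset (Finset.subset_univ _) ?_).symm
  intro k _ hk
  have hkn : n ≤ (k : ℕ) := by
    by_contra hlt
    push_neg at hlt
    exact hk (Finset.mem_map.mpr ⟨⟨(k : ℕ), hlt⟩, Finset.mem_univ _, Fin.ext rfl⟩)
  have hz : B k (Fin.castLE h q) = 0 := by
    refine hB _ _ ?_
    rw [Fin.lt_def]
    simpa using lt_of_lt_of_le q.2 hkn
  simp [hz]

private lemma det_sub_mem {S : Type*} [CommRing S] {m : ℕ} (I : Ideal S)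
    (X Y : Matrix (Fin m) (Fin m) S) (h : ∀ p q, X p q - Y p q ∈ I) :
    X.det - Y.det ∈ I := by
  have hXY : X.map (Ideal.Quotient.mk I) = Y.map (Ideal.Quotient.mk I) := by
    ext p q
    simpa [Matrix.map_apply, Ideal.Quotient.mk_eq_mk_iff_sub_mem] using h p q
  have hd := congrArg Matrix.det hXY
  rw [← RingHom.mapMatrix_apply, ← RingHom.mapMatrix_apply, ← RingHom.map_det,
    ← RingHom.map_det] at hd
  rwa [← Ideal.Quotient.mk_eq_mk_iff_sub_mem]

private lemma lu_minor {S : Type*} [CommRing S] {d : ℕ}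
    (Mk L U : Matrix (Fin d) (Fin d) S)
    (h1 : ∀ i j : Fin d, i < j → L i j = 0) (h2 : ∀ i, L i i = 1)
    (h3 : ∀ i j : Fin d, j < i → U i j = 0) (h4 : Mk = L * U)
    (i j : Fin d) (hij : j < i) :
    (Mk.submatrix (fun k : Fin ((j : ℕ) + 1) =>
        if (k : ℕ) = (j : ℕ) then i else Fin.castLE j.2 k) (Fin.castLE j.2)).det
      = L i j * (Mk.submatrix (Fin.castLE j.2) (Fin.castLE j.2)).det := by
  subst h4
  set ρ : Fin ((j : ℕ) + 1) → Fin d :=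
    fun k => if (k : ℕ) = (j : ℕ) then i else Fin.castLE j.2 k with hρ
  rw [aux_mul j.2 L U h3 ρ, aux_mul j.2 L U h3 (Fin.castLE j.2), Matrix.det_mul,
    Matrix.det_mul]
  have hL1 : (L.submatrix (Fin.castLE j.2) (Fin.castLE j.2)).det = 1 := by
    rw [Matrix.det_of_lowerTriangular]
    · exact Finset.prod_eq_one (fun p _ => h2 _)
    · intro p q hpq
      have hpq' : (p : ℕ) < (q : ℕ) := hpq
      refine h1 _ _ ?_
      rw [Fin.lt_def]
      simpa using hpq'
  have tri : ∀ p q : Fin ((j : ℕ) + 1), p < q →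
      (L.submatrix ρ (Fin.castLE j.2)) p q = 0 := by
    intro p q hpq
    have hq := q.2
    have hpq' : (p : ℕ) < (q : ℕ) := hpq
    have hp : (p : ℕ) ≠ (j : ℕ) := by omega
    simp only [Matrix.submatrix_apply, hρ, if_neg hp]
    refine h1 _ _ ?_
    rw [Fin.lt_def]
    simpa using hpq'
  have hL2 : (L.submatrix ρ (Fin.castLE j.2)).det = L i j := by
    rw [Matrix.det_of_lowerTriangular _ (fun p q hpq => tri p q hpq)]
    rw [Finset.prod_eq_single (⟨(j : ℕ), Nat.lt_succ_self _⟩ : Fin ((j : ℕ) + 1))]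
    · have he : Fin.castLE j.2 (⟨(j : ℕ), Nat.lt_succ_self _⟩ : Fin ((j : ℕ) + 1)) = j :=
        Fin.ext rfl
      simp [Matrix.submatrix_apply, hρ, he]
    · intro p _ hp
      have hp' : (p : ℕ) ≠ (j : ℕ) := fun hh => hp (Fin.ext hh)
      simp [Matrix.submatrix_apply, hρ, hp', h2]
    · simp
  rw [hL1, hL2]
  ring

/-- If `M ≡ M' (mod π^N)`, both admit LU decompositions over `K = Frac R`, and the
valuations `W i` of the principal minors of `M` satisfy `W i < N`, then the principal
minors of `M'` have the same valuations and
`L(M)_{i,j} ≡ L(M')_{i,j} (mod π^{N - 2 W j})` for all `i > j`. -/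
theorem stmt14 {R : Type*} [CommRing R] [IsDomain R] [IsDiscreteValuationRing R]
    (π : R) (hπ : Irreducible π) {d N : ℕ} (hN : 0 < N)
    (M M' : Matrix (Fin d) (Fin d) R)
    (hcong : ∀ i j, M i j - M' i j ∈ Ideal.span {π} ^ N)
    (W : Fin d → ℕ)
    (hW : ∀ i : Fin d,
      π ^ W i ∣ (M.submatrix (Fin.castLE i.2) (Fin.castLE i.2)).det ∧
      ¬ π ^ (W i + 1) ∣ (M.submatrix (Fin.castLE i.2) (Fin.castLE i.2)).det)
    (hWN : ∀ i, W i < N)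
    (Lm Um Lm' Um' : Matrix (Fin d) (Fin d) (FractionRing R))
    (h1 : ∀ i j : Fin d, i < j → Lm i j = 0) (h2 : ∀ i, Lm i i = 1)
    (h3 : ∀ i j : Fin d, j < i → Um i j = 0)
    (h4 : M.map (algebraMap R (FractionRing R)) = Lm * Um)
    (h1' : ∀ i j : Fin d, i < j → Lm' i j = 0) (h2' : ∀ i, Lm' i i = 1)
    (h3' : ∀ i j : Fin d, j < i → Um' i j = 0)
    (h4' : M'.map (algebraMap R (FractionRing R)) = Lm' * Um') :
    (∀ i : Fin d,
      π ^ W i ∣ (M'.submatrix (Fin.castLE i.2) (Fin.castLE i.2)).det ∧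
      ¬ π ^ (W i + 1) ∣ (M'.submatrix (Fin.castLE i.2) (Fin.castLE i.2)).det) ∧
    (∀ i j : Fin d, j < i → ∃ c : R,
      Lm i j - Lm' i j =
        algebraMap R (FractionRing R) π ^ ((N : ℤ) - 2 * (W j : ℤ)) *
          algebraMap R (FractionRing R) c) := by
  classical
  have hπ0 : π ≠ 0 := hπ.ne_zero
  set φ := algebraMap R (FractionRing R) with hφdef
  have hinj : Function.Injective φ := IsFractionRing.injective R (FractionRing R)
  have hφπ : φ π ≠ 0 := fun h => hπ0 (hinj (by simpa using h))
  have hdvd : ∀ p q, π ^ N ∣ M p q - M' p q := by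
    intro p q
    have h := hcong p q
    rwa [Ideal.span_singleton_pow, Ideal.mem_span_singleton] at h
  have hdet : ∀ {m : ℕ} (r c : Fin m → Fin d),
      π ^ N ∣ (M.submatrix r c).det - (M'.submatrix r c).det := by
    intro m r c
    rw [← Ideal.mem_span_singleton]
    exact det_sub_mem _ _ _ (fun p q => Ideal.mem_span_singleton.mpr (hdvd _ _))
  have part1 : ∀ i : Fin d,
      π ^ W i ∣ (M'.submatrix (Fin.castLE i.2) (Fin.castLE i.2)).det ∧
      ¬ π ^ (W i + 1) ∣ (M'.submatrix (Fin.castLE i.2) (Fin.castLE i.2)).det := by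
    intro i
    obtain ⟨hw1, hw2⟩ := hW i
    have hd := hdet (Fin.castLE i.2) (Fin.castLE i.2)
    constructor
    · have hdvd1 : π ^ W i ∣ (M.submatrix (Fin.castLE i.2) (Fin.castLE i.2)).det -
          (M'.submatrix (Fin.castLE i.2) (Fin.castLE i.2)).det :=
        dvd_trans (pow_dvd_pow π (le_of_lt (hWN i))) hd
      have := dvd_sub hw1 hdvd1
      rwa [sub_sub_cancel] at this
    · intro hc
      have hdvd1 : π ^ (W i + 1) ∣ (M.submatrix (Fin.castLE i.2) (Fin.castLE i.2)).det -
          (M'.submatrix (Fin.castLE i.2) (Fin.castLE i.2)).det :=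
        dvd_trans (pow_dvd_pow π (hWN i)) hd
      refine hw2 ?_
      have hrw : (M.submatrix (Fin.castLE i.2) (Fin.castLE i.2)).det =
          (M'.submatrix (Fin.castLE i.2) (Fin.castLE i.2)).det +
          ((M.submatrix (Fin.castLE i.2) (Fin.castLE i.2)).det -
            (M'.submatrix (Fin.castLE i.2) (Fin.castLE i.2)).det) := by ring
      rw [hrw]
      exact dvd_add hc hdvd1
  refine ⟨part1, ?_⟩
  intro i j hij
  set ρ : Fin ((j : ℕ) + 1) → Fin d :=
    fun k => if (k : ℕ) = (j : ℕ) then i else Fin.castLE j.2 k with hρ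
  obtain ⟨hw1, hw2⟩ := hW j
  obtain ⟨hw1', hw2'⟩ := part1 j
  have hAA' := hdet ρ (Fin.castLE j.2)
  have hδδ'dvd := hdet (Fin.castLE j.2) (Fin.castLE j.2)
  have hLmEq : φ ((M.submatrix ρ (Fin.castLE j.2)).det) =
      Lm i j * φ ((M.submatrix (Fin.castLE j.2) (Fin.castLE j.2)).det) := by
    have hk := lu_minor (M.map φ) Lm Um h1 h2 h3 h4 i j hij
    rw [Matrix.submatrix_map, Matrix.submatrix_map, ← RingHom.mapMatrix_apply,
      ← RingHom.mapMatrix_apply, ← RingHom.map_det, ← RingHom.map_det] at hk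
    exact hk
  have hLmEq' : φ ((M'.submatrix ρ (Fin.castLE j.2)).det) =
      Lm' i j * φ ((M'.submatrix (Fin.castLE j.2) (Fin.castLE j.2)).det) := by
    have hk := lu_minor (M'.map φ) Lm' Um' h1' h2' h3' h4' i j hij
    rw [Matrix.submatrix_map, Matrix.submatrix_map, ← RingHom.mapMatrix_apply,
      ← RingHom.mapMatrix_apply, ← RingHom.map_det, ← RingHom.map_det] at hk
    exact hk
  set A := (M.submatrix ρ (Fin.castLE j.2)).det with hA
  set δ := (M.submatrix (Fin.castLE j.2) (Fin.castLE j.2)).det with hδ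
  set A' := (M'.submatrix ρ (Fin.castLE j.2)).det with hA'
  set δ' := (M'.submatrix (Fin.castLE j.2) (Fin.castLE j.2)).det with hδ'
  have hδ0 : δ ≠ 0 := fun h0 => hw2 (h0 ▸ dvd_zero _)
  have hδ0' : δ' ≠ 0 := fun h0 => hw2' (h0 ▸ dvd_zero _)
  have hφδ : φ δ ≠ 0 := fun h => hδ0 (hinj (by simpa using h))
  have hφδ' : φ δ' ≠ 0 := fun h => hδ0' (hinj (by simpa using h))
  obtain ⟨a, ha⟩ := hw1
  obtain ⟨a', ha'⟩ := hw1'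
  have hau : IsUnit a := by
    rw [← IsLocalRing.notMem_maximalIdeal, hπ.maximalIdeal_eq, Ideal.mem_span_singleton]
    intro hda
    obtain ⟨t, ht⟩ := hda
    exact hw2 ⟨t, by rw [ha, ht, pow_succ]; ring⟩
  have hau' : IsUnit a' := by
    rw [← IsLocalRing.notMem_maximalIdeal, hπ.maximalIdeal_eq, Ideal.mem_span_singleton]
    intro hda
    obtain ⟨t, ht⟩ := hda
    exact hw2' ⟨t, by rw [ha', ht, pow_succ]; ring⟩
  set u : Rˣ := hau.unit * hau'.unit with hu
  have huval : (u : R) = a * a' := by simp [hu]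
  have hnum : π ^ N ∣ A * δ' - A' * δ := by
    have hr : A * δ' - A' * δ = A * (δ' - δ) + δ * (A - A') := by ring
    rw [hr]
    exact dvd_add ((dvd_sub_comm.mp hδδ'dvd).mul_left A) (hAA'.mul_left δ)
  obtain ⟨b, hb⟩ := hnum
  refine ⟨b * ↑u⁻¹, ?_⟩
  have hLmv : Lm i j = φ A / φ δ := by rw [eq_div_iff hφδ]; exact hLmEq.symm
  have hLmv' : Lm' i j = φ A' / φ δ' := by rw [eq_div_iff hφδ']; exact hLmEq'.symm
  have hz : (φ π) ^ ((N : ℤ) - 2 * (W j : ℤ)) = φ π ^ N / φ π ^ (2 * W j) := by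
    rw [zpow_sub₀ hφπ, zpow_natCast]
    congr 1
  rw [hLmv, hLmv', hz]
  have key : (A * δ' - δ * A') * π ^ (2 * W j) = π ^ N * (b * ↑u⁻¹) * (δ * δ') := by
    have hδδ : δ * δ' = π ^ (2 * W j) * (a * a') := by
      rw [ha, ha', two_mul, pow_add]; ring
    have h5 : A * δ' - δ * A' = π ^ N * b := by rw [← hb]; ring
    have h7 : (↑u⁻¹ : R) * ↑u = 1 := u.inv_mul
    rw [h5, hδδ, ← huval]
    linear_combination (-(π ^ N * b * π ^ (2 * W j))) * h7
  rw [div_sub_div _ _ hφδ hφδ', div_mul_eq_mul_div, div_eq_div_iff (mul_ne_zero hφδ hφδ')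
    (pow_ne_zero _ hφπ)]
  have hcast := congrArg φ key
  simpa only [_root_.map_mul, _root_.map_sub, _root_.map_pow] using hcast
end
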